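/- arXiv:1303.0990 — 7 statements merged into one kernel-verified Lean document; each statement's English description precedes it below -/
import Mathlib

section
/- For every signed permutation w in the hyperoctahedral group B_n, the statistic L(w) = (1/2)·#{(i,j) ∈ [−n,n]² : i < j, w(i) > w(j), i ≢ j (mod 2)} is a non-negative integer (i.e., the cardinality of this set is always even). -/
open Finset Polynomial

def IsSigned (n : ℕ) (w : ℤ → ℤ) : Prop :=
  (∀ j : ℤ, w (-j) = -w j) ∧
    Set.BijOn w (Set.Icc (-(n : ℤ)) n) (Set.Icc (-(n : ℤ)) n)

noncomputable def Lset (n : ℕ) (w : ℤ → ℤ) : Finset (ℤ × ℤ) :=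
  (Finset.Icc (-(n : ℤ)) n ×ˢ Finset.Icc (-(n : ℤ)) n).filter
    fun p => p.1 < p.2 ∧ w p.2 < w p.1 ∧ p.1 % 2 ≠ p.2 % 2

noncomputable def Lstat (n : ℕ) (w : ℤ → ℤ) : ℕ := (Lset n w).card / 2

noncomputable def invStat (n : ℕ) (w : ℤ → ℤ) : ℕ :=
  ((Finset.Icc (1 : ℤ) n ×ˢ Finset.Icc (1 : ℤ) n).filter
    fun p => p.1 < p.2 ∧ w p.2 < w p.1).card

noncomputable def negStat (n : ℕ) (w : ℤ → ℤ) : ℕ :=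
  ((Finset.Icc (1 : ℤ) n).filter fun i => w i < 0).card

noncomputable def nspStat (n : ℕ) (w : ℤ → ℤ) : ℕ :=
  ((Finset.Icc (1 : ℤ) n ×ˢ Finset.Icc (1 : ℤ) n).filter
    fun p => p.1 < p.2 ∧ w p.1 + w p.2 < 0).card

noncomputable def lenStat (n : ℕ) (w : ℤ → ℤ) : ℕ := invStat n w + negStat n w + nspStat n w

noncomputable def Dset (n : ℕ) (w : ℤ → ℤ) : Finset ℤ :=
  (Finset.Ico (0 : ℤ) n).filter fun i => w (i + 1) < w i

abbrev HypOct (n : ℕ) := Equiv.Perm (Fin n) × (Fin n → Bool)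

def HypOct.fn {n : ℕ} (w : HypOct n) : ℤ → ℤ := fun j =>
  if h : 1 ≤ j ∧ j ≤ (n : ℤ) then
    (if w.2 ⟨(j - 1).toNat, by omega⟩ then -1 else 1) *
      (((w.1 ⟨(j - 1).toNat, by omega⟩ : Fin n) : ℤ) + 1)
  else if h' : 1 ≤ -j ∧ -j ≤ (n : ℤ) then
    -((if w.2 ⟨(-j - 1).toNat, by omega⟩ then -1 else 1) *
      (((w.1 ⟨(-j - 1).toNat, by omega⟩ : Fin n) : ℤ) + 1))
  else 0

/-- For every `w ∈ Bₙ`, the set defining `L(w)` has even cardinality, so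
`L(w)` is a (non-negative) integer. -/
theorem L_is_integer (n : ℕ) (w : ℤ → ℤ) (hw : IsSigned n w) :
    2 ∣ (Lset n w).card := by
  classical
  obtain ⟨hneg, hbij⟩ := hw
  -- membership characterization
  have hmem : ∀ p : ℤ × ℤ, p ∈ Lset n w ↔
      (-(n:ℤ) ≤ p.1 ∧ p.1 ≤ n) ∧ (-(n:ℤ) ≤ p.2 ∧ p.2 ≤ n) ∧
      p.1 < p.2 ∧ w p.2 < w p.1 ∧ p.1 % 2 ≠ p.2 % 2 := by
    intro p
    simp [Lset, Finset.mem_filter, Finset.mem_product, Finset.mem_Icc, and_assoc]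
  -- no pair in Lset has sum zero (same parity)
  have hzero : ∀ p ∈ Lset n w, p.1 + p.2 ≠ 0 := by
    intro p hp h0
    rw [hmem] at hp
    have := hp.2.2.2.2
    omega
  -- the involution
  set A := (Lset n w).filter (fun p => p.1 + p.2 < 0) with hA
  set B := (Lset n w).filter (fun p => ¬ p.1 + p.2 < 0) with hB
  have hcard : A.card + B.card = (Lset n w).card :=
    Finset.card_filter_add_card_filter_not _
  have hmembij : ∀ p : ℤ × ℤ, p ∈ Lset n w → ((-p.2, -p.1) : ℤ × ℤ) ∈ Lset n w := by
    intro p hp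
    rw [hmem] at hp ⊢
    refine ⟨⟨by omega, by omega⟩, ⟨by omega, by omega⟩, by omega, ?_, by omega⟩
    rw [hneg, hneg]
    have := hp.2.2.2.1
    omega
  have hAB : A.card = B.card := by
    apply Finset.card_bij (fun p _ => ((-p.2, -p.1) : ℤ × ℤ))
    · intro p hp
      rw [hB, Finset.mem_filter]
      rw [hA, Finset.mem_filter] at hp
      exact ⟨hmembij p hp.1, by simp; omega⟩
    · intro p hp q hq h
      rw [Prod.ext_iff] at h
      simp at h
      exact Prod.ext h.2 h.1
    · intro q hq
      rw [hB, Finset.mem_filter] at hq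
      refine ⟨(-q.2, -q.1), ?_, by simp⟩
      rw [hA, Finset.mem_filter]
      have h0 := hzero q hq.1
      exact ⟨hmembij q hq.1, by simp; omega⟩
  omega
end

section
/- For every w ∈ B_n, L(w) = a(w) + b(w) + 2c(w), where a(w) = #{odd j ∈ [1,n] : w(j) < 0}, b(w) = #{(j,j') ∈ [1,n]² : j < j', |w(j)| > |w(j')|, j ≢ j' mod 2}, and c(w) = #{(j,j') ∈ [1,n]² : j < j', |w(j)| < |w(j')|, w(j') < 0, j ≢ j' mod 2}. -/
open Finset Polynomial

noncomputable def aStat (n : ℕ) (w : ℤ → ℤ) : ℕ :=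
  ((Finset.Icc (1 : ℤ) n).filter fun j => j % 2 = 1 ∧ w j < 0).card

noncomputable def bStat (n : ℕ) (w : ℤ → ℤ) : ℕ :=
  ((Finset.Icc (1 : ℤ) n ×ˢ Finset.Icc (1 : ℤ) n).filter
    fun p => p.1 < p.2 ∧ |w p.2| < |w p.1| ∧ p.1 % 2 ≠ p.2 % 2).card

noncomputable def cStat (n : ℕ) (w : ℤ → ℤ) : ℕ :=
  ((Finset.Icc (1 : ℤ) n ×ˢ Finset.Icc (1 : ℤ) n).filter
    fun p => p.1 < p.2 ∧ |w p.1| < |w p.2| ∧ w p.2 < 0 ∧ p.1 % 2 ≠ p.2 % 2).card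

/-- auxiliary statistic: parity-mixed inversions among positive positions -/
noncomputable def AStat (n : ℕ) (w : ℤ → ℤ) : ℕ :=
  ((Finset.Icc (1 : ℤ) n ×ˢ Finset.Icc (1 : ℤ) n).filter
    fun p => p.1 < p.2 ∧ w p.2 < w p.1 ∧ p.1 % 2 ≠ p.2 % 2).card

/-- auxiliary statistic: parity-mixed negative sum pairs among positive positions -/
noncomputable def CStat (n : ℕ) (w : ℤ → ℤ) : ℕ :=
  ((Finset.Icc (1 : ℤ) n ×ˢ Finset.Icc (1 : ℤ) n).filter
    fun p => p.1 < p.2 ∧ w p.1 + w p.2 < 0 ∧ p.1 % 2 ≠ p.2 % 2).card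

lemma key (a b : ℤ) (h : |a| ≠ |b|) :
    ((if b < a then 1 else 0) + if a + b < 0 then 1 else 0 : ℕ)
      = (if |b| < |a| then 1 else 0) + 2 * (if |a| < |b| ∧ b < 0 then 1 else 0) := by
  have h1 := abs_choice a
  have h2 := abs_choice b
  have h3 := abs_nonneg a
  have h4 := abs_nonneg b
  split_ifs <;> omega

lemma w_zero (n : ℕ) (w : ℤ → ℤ) (hw : IsSigned n w) : w 0 = 0 := by
  have := hw.1 0; simp at this; omega

lemma abs_ne (n : ℕ) (w : ℤ → ℤ) (hw : IsSigned n w) (j k : ℤ)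
    (hj : 1 ≤ j ∧ j ≤ n) (hk : 1 ≤ k ∧ k ≤ n) (hjk : j ≠ k) : |w j| ≠ |w k| := by
  intro h
  rcases abs_eq_abs.mp h with h' | h'
  · exact hjk (hw.2.2.1 (by simp [Set.mem_Icc]; omega) (by simp [Set.mem_Icc]; omega) h')
  · have h'' : w j = w (-k) := by rw [hw.1]; omega
    have := hw.2.2.1 (show j ∈ Set.Icc (-(n:ℤ)) n by simp [Set.mem_Icc]; omega)
      (show -k ∈ Set.Icc (-(n:ℤ)) n by simp [Set.mem_Icc]; omega) h''
    omega

lemma AC_eq (n : ℕ) (w : ℤ → ℤ) (hw : IsSigned n w) :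
    AStat n w + CStat n w = bStat n w + 2 * cStat n w := by
  unfold AStat CStat bStat cStat
  rw [Finset.card_filter, Finset.card_filter, Finset.card_filter, Finset.card_filter,
    ← Finset.sum_add_distrib, Finset.mul_sum, ← Finset.sum_add_distrib]
  apply Finset.sum_congr rfl
  intro p hp
  simp only [Finset.mem_product, Finset.mem_Icc] at hp
  by_cases hc : p.1 < p.2 ∧ p.1 % 2 ≠ p.2 % 2
  · have habs : |w p.1| ≠ |w p.2| :=
      abs_ne n w hw p.1 p.2 ⟨hp.1.1, hp.1.2⟩ ⟨hp.2.1, hp.2.2⟩ (by omega)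
    simp only [hc.1, hc.2, ne_eq, not_false_iff, true_and, and_true]
    exact key (w p.1) (w p.2) habs
  · rw [if_neg (fun h => hc ⟨h.1, h.2.2⟩), if_neg (fun h => hc ⟨h.1, h.2.2⟩),
      if_neg (fun h => hc ⟨h.1, h.2.2⟩), if_neg (fun h => hc ⟨h.1, h.2.2.2⟩)]
    rfl


/-- `L(w) = a(w) + b(w) + 2c(w)`. -/
theorem L_eq_a_add_b_add_two_c (n : ℕ) (w : ℤ → ℤ) (hw : IsSigned n w) :
    Lstat n w = aStat n w + bStat n w + 2 * cStat n w := by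
  have hodd := hw.1
  have hw0 := w_zero n w hw
  have hmem : ∀ p : ℤ × ℤ, p ∈ Lset n w ↔
      (-(n:ℤ) ≤ p.1 ∧ p.1 ≤ n) ∧ (-(n:ℤ) ≤ p.2 ∧ p.2 ≤ n) ∧
        p.1 < p.2 ∧ w p.2 < w p.1 ∧ p.1 % 2 ≠ p.2 % 2 := by
    intro p
    simp [Lset, Finset.mem_filter, Finset.mem_product, Finset.mem_Icc, and_assoc]
  set H := (Lset n w).filter (fun p : ℤ × ℤ => 0 < p.1 + p.2) with hH
  -- halving
  have hhalf : (Lset n w).card = 2 * H.card := by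
    have h1 := Finset.card_filter_add_card_filter_not
      (s := Lset n w) (p := fun p : ℤ × ℤ => 0 < p.1 + p.2)
    rw [← hH] at h1
    have h2 : ((Lset n w).filter (fun p : ℤ × ℤ => ¬ 0 < p.1 + p.2)).card = H.card := by
      apply Finset.card_nbij' (fun p => (-p.2, -p.1)) (fun p => (-p.2, -p.1))
      · intro p hp
        simp only [Finset.mem_coe, hH, Finset.mem_filter, hmem, hodd] at hp ⊢
        omega
      · intro p hp
        simp only [Finset.mem_coe, hH, Finset.mem_filter, hmem, hodd] at hp ⊢
        omega
      · intro p _; simp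
      · intro p _; simp
    omega
  -- splitting H into three parts
  have hsplit : H.card = AStat n w + aStat n w + CStat n w := by
    have h1 := Finset.card_filter_add_card_filter_not
      (s := H) (p := fun p : ℤ × ℤ => 0 < p.1)
    have h2 := Finset.card_filter_add_card_filter_not
      (s := H.filter (fun p : ℤ × ℤ => ¬ 0 < p.1)) (p := fun p : ℤ × ℤ => p.1 = 0)
    have e1 : (H.filter (fun p : ℤ × ℤ => 0 < p.1)).card = AStat n w := by
      unfold AStat
      refine congrArg Finset.card (Finset.ext fun p => ?_)
      simp only [hH, Finset.mem_filter, hmem, Finset.mem_product, Finset.mem_Icc]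
      constructor
      · rintro ⟨⟨⟨h1, h2, h3, h4, h5⟩, h6⟩, h7⟩
        exact ⟨⟨⟨by omega, by omega⟩, by omega, by omega⟩, h3, h4, h5⟩
      · rintro ⟨⟨⟨h1a, h1b⟩, h2a, h2b⟩, h3, h4, h5⟩
        exact ⟨⟨⟨⟨by omega, by omega⟩, ⟨by omega, by omega⟩, h3, h4, h5⟩, by omega⟩, by omega⟩
    have e2 : ((H.filter (fun p : ℤ × ℤ => ¬ 0 < p.1)).filter
        (fun p : ℤ × ℤ => p.1 = 0)).card = aStat n w := by
      unfold aStat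
      apply Finset.card_nbij' (fun p => p.2) (fun j => ((0 : ℤ), j))
      · intro p hp
        simp only [Finset.mem_coe, hH, Finset.mem_filter, hmem] at hp
        obtain ⟨⟨⟨⟨h1, h2, h3, h4, h5⟩, h6⟩, h7⟩, h8⟩ := hp
        rw [h8, hw0] at h4
        rw [h8] at h3 h5
        simp only [Finset.mem_coe, Finset.mem_filter, Finset.mem_Icc]
        exact ⟨⟨by omega, by omega⟩, by omega, h4⟩
      · intro j hj
        simp only [Finset.mem_coe, Finset.mem_filter, Finset.mem_Icc] at hj
        obtain ⟨⟨hj1, hj2⟩, hj3, hj4⟩ := hj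
        simp only [Finset.mem_coe, hH, Finset.mem_filter, hmem]
        simp only [hw0]
        refine ⟨⟨⟨⟨?_, ?_, ?_, hj4, ?_⟩, ?_⟩, ?_⟩, trivial⟩ <;> omega
      · intro p hp
        simp only [Finset.mem_coe, Finset.mem_filter] at hp
        rw [Prod.ext_iff]
        exact ⟨hp.2.symm, rfl⟩
      · intro j _; rfl
    have e3 : ((H.filter (fun p : ℤ × ℤ => ¬ 0 < p.1)).filter
        (fun p : ℤ × ℤ => ¬ p.1 = 0)).card = CStat n w := by
      unfold CStat
      apply Finset.card_nbij' (fun p => (-p.1, p.2)) (fun p => (-p.1, p.2))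
      · intro p hp
        simp only [Finset.mem_coe, hH, Finset.mem_filter, hmem, hodd, Finset.mem_product,
          Finset.mem_Icc] at hp ⊢
        omega
      · intro p hp
        simp only [Finset.mem_coe, hH, Finset.mem_filter, hmem, hodd, Finset.mem_product,
          Finset.mem_Icc] at hp ⊢
        omega
      · intro p _; simp
      · intro p _; simp
    omega
  unfold Lstat
  rw [hhalf, Nat.mul_div_cancel_left _ (by norm_num), hsplit]
  have := AC_eq n w hw
  omega
end

section
/- On B_n the equality inv + nsp = b̄ + 2c̄ holds, where b̄(w) = #{(j,j') ∈ [1,n]² : j < j', |w(j)| > |w(j')|} and c̄(w) = #{(j,j') ∈ [1,n]² : j < j', |w(j)| < |w(j')|, w(j') < 0}. -/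
open Finset Polynomial

noncomputable def bbarStat (n : ℕ) (w : ℤ → ℤ) : ℕ :=
  ((Finset.Icc (1 : ℤ) n ×ˢ Finset.Icc (1 : ℤ) n).filter
    fun p => p.1 < p.2 ∧ |w p.2| < |w p.1|).card

noncomputable def cbarStat (n : ℕ) (w : ℤ → ℤ) : ℕ :=
  ((Finset.Icc (1 : ℤ) n ×ˢ Finset.Icc (1 : ℤ) n).filter
    fun p => p.1 < p.2 ∧ |w p.1| < |w p.2| ∧ w p.2 < 0).card

/-- On `Bₙ` one has `inv + nsp = b̄ + 2c̄`. -/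
theorem inv_add_nsp_eq (n : ℕ) (w : ℤ → ℤ) (hw : IsSigned n w) :
    invStat n w + nspStat n w = bbarStat n w + 2 * cbarStat n w := by
  obtain ⟨hodd, hmaps, hinj, _⟩ := hw
  have h0 : w 0 = 0 := by have := hodd 0; simp at this; omega
  have key : ∀ p : ℤ × ℤ, p ∈ (Finset.Icc (1 : ℤ) n ×ˢ Finset.Icc (1 : ℤ) n) →
      ((if p.1 < p.2 ∧ w p.2 < w p.1 then 1 else 0) +
       (if p.1 < p.2 ∧ w p.1 + w p.2 < 0 then 1 else 0) : ℕ) =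
      (if p.1 < p.2 ∧ |w p.2| < |w p.1| then 1 else 0) +
       2 * (if p.1 < p.2 ∧ |w p.1| < |w p.2| ∧ w p.2 < 0 then 1 else 0) := by
    rintro ⟨i, j⟩ hp
    simp only [Finset.mem_product, Finset.mem_Icc] at hp
    dsimp only
    by_cases hij : i < j
    · have hi : (i : ℤ) ∈ Set.Icc (-(n : ℤ)) n := by
        constructor <;> [omega; exact hp.1.2]
      have hj : (j : ℤ) ∈ Set.Icc (-(n : ℤ)) n := by
        constructor <;> [omega; exact hp.2.2]
      have hnj : (-j : ℤ) ∈ Set.Icc (-(n : ℤ)) n := by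
        constructor <;> omega
      have h00 : (0 : ℤ) ∈ Set.Icc (-(n : ℤ)) n := by
        constructor <;> omega
      have h1 : w i ≠ w j := fun h => absurd (hinj hi hj h) (by omega)
      have h2 : w i ≠ -w j := by
        intro h
        rw [← hodd j] at h
        exact absurd (hinj hi hnj h) (by omega)
      have h3 : w i ≠ 0 := by
        intro h; rw [← h0] at h
        exact absurd (hinj hi h00 h) (by omega)
      have h4 : w j ≠ 0 := by
        intro h; rw [← h0] at h
        exact absurd (hinj hj h00 h) (by omega)
      rcases abs_cases (w i) with ⟨ha, ha'⟩ | ⟨ha, ha'⟩ <;>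
        rcases abs_cases (w j) with ⟨hb, hb'⟩ | ⟨hb, hb'⟩ <;>
          rw [ha, hb] <;> split_ifs <;> omega
    · split_ifs <;> simp_all
  simp only [invStat, nspStat, bbarStat, cbarStat, Finset.card_filter]
  rw [← Finset.sum_add_distrib, Finset.mul_sum, ← Finset.sum_add_distrib]
  exact Finset.sum_congr rfl key
end

section
/- Let w₀ = [−1,−2,…,−n] be the longest element of B_n. Then for all w ∈ B_n, L(w·w₀) = L(w₀·w) = L(w₀) − L(w), where L(w₀) = n(n+1)/2. -/
open Finset Polynomial

lemma mem_Lset {n : ℕ} {w : ℤ → ℤ} {p : ℤ × ℤ} :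
    p ∈ Lset n w ↔ (-(n:ℤ) ≤ p.1 ∧ p.1 ≤ n) ∧ (-(n:ℤ) ≤ p.2 ∧ p.2 ≤ n) ∧
      p.1 < p.2 ∧ w p.2 < w p.1 ∧ p.1 % 2 ≠ p.2 % 2 := by
  simp only [Lset, Finset.mem_filter, Finset.mem_product, Finset.mem_Icc]
  tauto

-- flip lemma
lemma card_flip (n : ℕ) (w : ℤ → ℤ) :
    (Lset n (fun j => w (-j))).card = (Lset n (fun j => -(w j))).card := by
  apply Finset.card_nbij' (fun p => (-p.2, -p.1)) (fun p => (-p.2, -p.1))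
  · intro p hp
    simp only [Finset.mem_coe] at hp ⊢
    rw [mem_Lset] at hp ⊢
    obtain ⟨h1, h2, h3, h4, h5⟩ := hp
    refine ⟨by omega, by omega, by omega, by simpa using h4, by omega⟩
  · intro p hp
    simp only [Finset.mem_coe] at hp ⊢
    rw [mem_Lset] at hp ⊢
    obtain ⟨h1, h2, h3, h4, h5⟩ := hp
    refine ⟨by omega, by omega, by omega, by simpa using h4, by omega⟩
  · intro p _; simp
  · intro p _; simp

-- evenness
lemma even_card_Lset (n : ℕ) (w : ℤ → ℤ) (hodd : ∀ j : ℤ, w (-j) = -w j) :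
    Even (Lset n w).card := by
  classical
  have hsplit := Finset.card_filter_add_card_filter_not
    (s := Lset n w) (p := fun p => p.1 + p.2 < 0)
  have hcard : ((Lset n w).filter fun p => p.1 + p.2 < 0).card
      = ((Lset n w).filter fun p => ¬ p.1 + p.2 < 0).card := by
    apply Finset.card_nbij' (fun p => (-p.2, -p.1)) (fun p => (-p.2, -p.1))
    · intro p hp
      simp only [Finset.mem_coe, Finset.mem_filter] at hp ⊢
      obtain ⟨hp, hs⟩ := hp
      rw [mem_Lset] at hp
      obtain ⟨h1, h2, h3, h4, h5⟩ := hp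
      refine ⟨mem_Lset.2 ⟨by omega, by omega, by omega, ?_, by omega⟩, by omega⟩
      rw [hodd, hodd]; omega
    · intro p hp
      simp only [Finset.mem_coe, Finset.mem_filter] at hp ⊢
      obtain ⟨hp, hs⟩ := hp
      rw [mem_Lset] at hp
      obtain ⟨h1, h2, h3, h4, h5⟩ := hp
      refine ⟨mem_Lset.2 ⟨by omega, by omega, by omega, ?_, by omega⟩, by omega⟩
      rw [hodd, hodd]; omega
    · intro p _; simp
    · intro p _; simp
  rw [← hsplit, hcard]
  exact Even.add_self _

-- card of the full set T
lemma card_Lset_neg (n : ℕ) :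
    (Lset n (fun j : ℤ => -j)).card = n * (n + 1) := by
  have : (Lset n (fun j : ℤ => -j)).card
      = (Finset.Icc (1:ℤ) n ×ˢ Finset.Icc (1:ℤ) (n+1)).card := by
    apply Finset.card_nbij'
      (fun p => if 0 < p.1 + p.2 then (p.2, (p.1 + p.2 + 1) / 2)
                else ((p.2 - p.1 + 1) / 2, -p.1 + 1))
      (fun q => if q.2 ≤ q.1 then (2 * q.2 - 1 - q.1, q.1)
                else (1 - q.2, 2 * q.1 - q.2))
    · intro p hp
      simp only [Finset.mem_coe] at hp ⊢
      rw [mem_Lset] at hp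
      simp only [Finset.mem_product, Finset.mem_Icc]
      obtain ⟨h1, h2, h3, h4, h5⟩ := hp
      split <;> constructor <;> constructor <;> omega
    · intro q hq
      simp only [Finset.mem_coe, Finset.mem_product, Finset.mem_Icc] at hq ⊢
      rw [mem_Lset]
      obtain ⟨⟨hq1, hq2⟩, hq3, hq4⟩ := hq
      split <;> refine ⟨by omega, by omega, by omega, by omega, by omega⟩
    · intro p hp
      simp only [Finset.mem_coe] at hp
      beta_reduce
      rw [mem_Lset] at hp
      obtain ⟨h1, h2, h3, h4, h5⟩ := hp
      rcases lt_trichotomy (p.1 + p.2) 0 with h | h | h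
      · have hc : ¬ (0 < p.1 + p.2) := by omega
        rw [if_neg hc]
        have hd : (p.2 - p.1 + 1) / 2 * 2 = p.2 - p.1 + 1 := by omega
        rw [if_neg (show ¬ ((((p.2 - p.1 + 1) / 2 : ℤ), (-p.1 + 1 : ℤ)).2 ≤
          (((p.2 - p.1 + 1) / 2 : ℤ), (-p.1 + 1 : ℤ)).1) by simp; omega)]
        ext <;> simp <;> omega
      · omega
      · have hc : (0 : ℤ) < p.1 + p.2 := by omega
        rw [if_pos hc]
        have hd : (p.1 + p.2 + 1) / 2 * 2 = p.1 + p.2 + 1 := by omega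
        rw [if_pos (show (((p.2 : ℤ), ((p.1 + p.2 + 1) / 2 : ℤ)).2 ≤
          ((p.2 : ℤ), ((p.1 + p.2 + 1) / 2 : ℤ)).1) by simp; omega)]
        ext <;> simp <;> omega
    · intro q hq
      simp only [Finset.mem_coe, Finset.mem_product, Finset.mem_Icc] at hq
      beta_reduce
      obtain ⟨⟨hq1, hq2⟩, hq3, hq4⟩ := hq
      by_cases h : q.2 ≤ q.1
      · rw [if_pos h]
        rw [if_pos (show (0 : ℤ) < (2 * q.2 - 1 - q.1, q.1).1 + (2 * q.2 - 1 - q.1, q.1).2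
          by simp; omega)]
        ext <;> simp <;> omega
      · rw [if_neg h]
        rw [if_neg (show ¬ ((0 : ℤ) < (1 - q.2, 2 * q.1 - q.2).1 + (1 - q.2, 2 * q.1 - q.2).2)
          by simp; omega)]
        ext <;> simp <;> omega
  rw [this, Finset.card_product, Int.card_Icc, Int.card_Icc]
  simp

lemma card_add_of_signed (n : ℕ) (w : ℤ → ℤ) (hw : IsSigned n w) :
    (Lset n w).card + (Lset n (fun j => w (-j))).card = n * (n + 1) := by
  classical
  obtain ⟨hodd, hbij⟩ := hw
  have hne : ∀ p : ℤ × ℤ, (-(n:ℤ) ≤ p.1 ∧ p.1 ≤ n) → (-(n:ℤ) ≤ p.2 ∧ p.2 ≤ n) →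
      p.1 < p.2 → w p.1 ≠ w p.2 := by
    intro p h1 h2 h3 he
    have := hbij.injOn (Set.mem_Icc.2 h1) (Set.mem_Icc.2 h2) he
    omega
  have e1 : Lset n w = (Lset n (fun j : ℤ => -j)).filter (fun p => w p.2 < w p.1) := by
    ext p
    simp only [Finset.mem_filter, mem_Lset]
    constructor
    · rintro ⟨h1, h2, h3, h4, h5⟩
      exact ⟨⟨h1, h2, h3, by omega, h5⟩, h4⟩
    · rintro ⟨⟨h1, h2, h3, _, h5⟩, h6⟩
      exact ⟨h1, h2, h3, h6, h5⟩
  have e2 : Lset n (fun j => w (-j))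
      = (Lset n (fun j : ℤ => -j)).filter (fun p => ¬ w p.2 < w p.1) := by
    ext p
    simp only [Finset.mem_filter, mem_Lset]
    constructor
    · rintro ⟨h1, h2, h3, h4, h5⟩
      rw [hodd, hodd] at h4
      have := hne p h1 h2 h3
      exact ⟨⟨h1, h2, h3, by omega, h5⟩, by omega⟩
    · rintro ⟨⟨h1, h2, h3, _, h5⟩, h6⟩
      have := hne p h1 h2 h3
      refine ⟨h1, h2, h3, ?_, h5⟩
      rw [hodd, hodd]
      omega
  rw [e1, e2, Finset.card_filter_add_card_filter_not, card_Lset_neg]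

/-- `L(w·w₀) = L(w₀·w) = L(w₀) − L(w)`, with `L(w₀) = n(n+1)/2`, where
`w₀ : j ↦ -j` is the longest element. -/
theorem L_mul_longest (n : ℕ) (w : ℤ → ℤ) (hw : IsSigned n w) :
    Lstat n (fun j => w (-j)) = Lstat n (fun j => -(w j)) ∧
    Lstat n (fun j : ℤ => -j) = n * (n + 1) / 2 ∧
    Lstat n (fun j => w (-j)) + Lstat n w = n * (n + 1) / 2 := by
  refine ⟨?_, ?_, ?_⟩
  · unfold Lstat
    rw [card_flip]
  · unfold Lstat
    rw [card_Lset_neg]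
  · unfold Lstat
    have h1 := card_add_of_signed n w hw
    have h2 := even_card_Lset n w hw.1
    have h3 := even_card_Lset n (fun j => w (-j)) (by
      intro j
      simp only [neg_neg]
      have := hw.1 (-j)
      rw [hw.1 j] at this ⊢
      omega)
    rw [Nat.even_iff] at h2 h3
    omega
end

section
/- The identity is the unique element w ∈ B_n with L(w) = 0, and consequently the longest element w₀ = −Id is the unique element of B_n attaining the maximum value L(w₀) = n(n+1)/2. -/
open Finset Polynomial

open Finset

-- count of evens in an even-length block
lemma ico_even_card (a : ℤ) : ∀ k : ℕ,
    ((Finset.Ico a (a + 2 * (k : ℤ))).filter (fun i => i % 2 = 0)).card = k := by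
  intro k
  induction k with
  | zero => simp
  | succ k ih =>
    have hsplit : Finset.Ico a (a + 2 * ((k + 1 : ℕ) : ℤ)) =
        Finset.Ico a (a + 2 * (k : ℤ)) ∪ Finset.Ico (a + 2 * (k : ℤ)) (a + 2 * (k : ℤ) + 2) := by
      rw [Finset.Ico_union_Ico_eq_Ico (by omega) (by omega)]
      congr 1
      push_cast
      ring
    rw [hsplit, Finset.filter_union, Finset.card_union_of_disjoint
      (Disjoint.mono (Finset.filter_subset _ _) (Finset.filter_subset _ _)
        (Finset.Ico_disjoint_Ico_consecutive _ _ _)), ih]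
    have : ((Finset.Ico (a + 2 * (k : ℤ)) (a + 2 * (k : ℤ) + 2)).filter (fun i => i % 2 = 0)).card = 1 := by
      set b := a + 2 * (k : ℤ) with hb
      rcases Int.emod_two_eq b with h | h
      · have : (Finset.Ico b (b + 2)).filter (fun i => i % 2 = 0) = {b} := by
          ext x
          simp only [Finset.mem_filter, Finset.mem_Ico, Finset.mem_singleton]
          omega
        rw [this, Finset.card_singleton]
      · have : (Finset.Ico b (b + 2)).filter (fun i => i % 2 = 0) = {b + 1} := by
          ext x
          simp only [Finset.mem_filter, Finset.mem_Ico, Finset.mem_singleton]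
          omega
        rw [this, Finset.card_singleton]
    omega

lemma even_card_Icc (n : ℕ) :
    ((Finset.Icc (-(n:ℤ)) n).filter (fun i => i % 2 = 0)).card
      = n + (if (n:ℤ) % 2 = 0 then 1 else 0) := by
  have h1 : Finset.Icc (-(n:ℤ)) n = Finset.Ico (-(n:ℤ)) ((n:ℤ) + 1) := by
    ext x; simp only [Finset.mem_Icc, Finset.mem_Ico]; omega
  have h2 : Finset.Ico (-(n:ℤ)) ((n:ℤ) + 1) =
      Finset.Ico (-(n:ℤ)) (-(n:ℤ) + 2 * (n:ℤ)) ∪ Finset.Ico (-(n:ℤ) + 2 * (n:ℤ)) ((n:ℤ) + 1) := by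
    rw [Finset.Ico_union_Ico_eq_Ico (by omega) (by omega)]
  rw [h1, h2, Finset.filter_union, Finset.card_union_of_disjoint
    (Disjoint.mono (Finset.filter_subset _ _) (Finset.filter_subset _ _)
      (Finset.Ico_disjoint_Ico_consecutive _ _ _))]
  have h3 : ((Finset.Ico (-(n:ℤ)) (-(n:ℤ) + 2 * (n:ℤ))).filter (fun i => i % 2 = 0)).card = n := by
    have := ico_even_card (-(n:ℤ)) n
    simpa using this
  have h4 : Finset.Ico (-(n:ℤ) + 2 * (n:ℤ)) ((n:ℤ) + 1) = {(n:ℤ)} := by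
    ext x; simp only [Finset.mem_Ico, Finset.mem_singleton]; omega
  rw [h3, h4, Finset.filter_singleton]
  split_ifs <;> simp

lemma odd_card_Icc (n : ℕ) :
    ((Finset.Icc (-(n:ℤ)) n).filter (fun i => i % 2 = 1)).card
      = n + (if (n:ℤ) % 2 = 0 then 0 else 1) := by
  have htot := Finset.card_filter_add_card_filter_not
    (s := Finset.Icc (-(n:ℤ)) n) (p := fun i => i % 2 = 0)
  have hcongr : (Finset.Icc (-(n:ℤ)) n).filter (fun i => ¬ i % 2 = 0)
      = (Finset.Icc (-(n:ℤ)) n).filter (fun i => i % 2 = 1) := by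
    apply Finset.filter_congr
    intro x _
    omega
  have hcard : (Finset.Icc (-(n:ℤ)) n).card = 2 * n + 1 := by
    rw [Int.card_Icc]
    omega
  rw [hcongr] at htot
  rw [even_card_Icc] at htot
  split_ifs at htot ⊢ <;> omega

lemma S_card (n : ℕ) :
    ((Finset.Icc (-(n:ℤ)) n ×ˢ Finset.Icc (-(n:ℤ)) n).filter
      fun p => p.1 < p.2 ∧ p.1 % 2 ≠ p.2 % 2).card = n * (n + 1) := by
  set E := (Finset.Icc (-(n:ℤ)) n).filter (fun i => i % 2 = 0) with hE
  set O := (Finset.Icc (-(n:ℤ)) n).filter (fun i => i % 2 = 1) with hO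
  have key : ((Finset.Icc (-(n:ℤ)) n ×ˢ Finset.Icc (-(n:ℤ)) n).filter
      fun p => p.1 < p.2 ∧ p.1 % 2 ≠ p.2 % 2).card = (E ×ˢ O).card := by
    apply Finset.card_nbij' (i := fun p => if p.1 % 2 = 0 then p else p.swap)
      (j := fun p => if p.1 < p.2 then p else p.swap)
    · rintro ⟨x, y⟩ hp
      simp only [Finset.mem_coe, Finset.mem_filter, Finset.mem_product, Finset.mem_Icc] at hp
      simp only [Finset.mem_coe]
      split_ifs with h
      · simp only [hE, hO, Finset.mem_product, Finset.mem_filter, Finset.mem_Icc]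
        refine ⟨⟨⟨?_, ?_⟩, ?_⟩, ⟨?_, ?_⟩, ?_⟩ <;> omega
      · simp only [hE, hO, Prod.swap, Finset.mem_product, Finset.mem_filter, Finset.mem_Icc]
        refine ⟨⟨⟨?_, ?_⟩, ?_⟩, ⟨?_, ?_⟩, ?_⟩ <;> omega
    · rintro ⟨a, b⟩ hp
      simp only [Finset.mem_coe, hE, hO, Finset.mem_product, Finset.mem_filter, Finset.mem_Icc] at hp
      simp only [Finset.mem_coe]
      split_ifs with h
      · simp only [Finset.mem_filter, Finset.mem_product, Finset.mem_Icc]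
        refine ⟨⟨⟨?_, ?_⟩, ?_, ?_⟩, ?_, ?_⟩ <;> omega
      · simp only [Prod.swap, Finset.mem_filter, Finset.mem_product, Finset.mem_Icc]
        refine ⟨⟨⟨?_, ?_⟩, ?_, ?_⟩, ?_, ?_⟩ <;> omega
    · rintro ⟨x, y⟩ hp
      simp only [Finset.mem_coe, Finset.mem_filter, Finset.mem_product, Finset.mem_Icc] at hp
      beta_reduce
      by_cases h : (x, y).1 % 2 = 0
      · rw [if_pos h, if_pos hp.2.1]
      · rw [if_neg h]
        have h2 : ¬ ((x, y).swap.1 < (x, y).swap.2) := by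
          simp only [Prod.swap]
          omega
        rw [if_neg h2, Prod.swap_swap]
    · rintro ⟨a, b⟩ hp
      simp only [Finset.mem_coe, hE, hO, Finset.mem_product, Finset.mem_filter, Finset.mem_Icc] at hp
      beta_reduce
      by_cases h : a < b
      · rw [if_pos h, if_pos hp.1.2]
      · rw [if_neg h]
        have h2 : ¬ ((a, b).swap.1 % 2 = 0) := by
          simp only [Prod.swap]
          omega
        rw [if_neg h2, Prod.swap_swap]
  rw [key, Finset.card_product, hE, hO, even_card_Icc, odd_card_Icc]
  split_ifs <;> ring

lemma ge_of_incr (n : ℕ) (w : ℤ → ℤ)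
    (hmap : ∀ j : ℤ, -(n:ℤ) ≤ j → j ≤ n → -(n:ℤ) ≤ w j ∧ w j ≤ n)
    (hmono : ∀ i : ℤ, -(n:ℤ) ≤ i → i + 1 ≤ n → w i < w (i + 1)) :
    ∀ (k : ℕ) (j : ℤ), j = -(n:ℤ) + k → j ≤ n → j ≤ w j := by
  intro k
  induction k with
  | zero =>
    intro j hj hjn
    have := hmap j (by omega) hjn
    omega
  | succ k ih =>
    intro j hj hjn
    have hj' : j = -(n:ℤ) + k + 1 := by push_cast at hj; omega
    have h1 : j - 1 ≤ w (j - 1) := ih (j - 1) (by omega) (by omega)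
    have h2 : w (j - 1) < w (j - 1 + 1) := hmono (j - 1) (by omega) (by omega)
    have h3 : j - 1 + 1 = j := by ring
    rw [h3] at h2
    omega

lemma le_of_incr (n : ℕ) (w : ℤ → ℤ)
    (hmap : ∀ j : ℤ, -(n:ℤ) ≤ j → j ≤ n → -(n:ℤ) ≤ w j ∧ w j ≤ n)
    (hmono : ∀ i : ℤ, -(n:ℤ) ≤ i → i + 1 ≤ n → w i < w (i + 1)) :
    ∀ (k : ℕ) (j : ℤ), j = (n:ℤ) - k → -(n:ℤ) ≤ j → w j ≤ j := by
  intro k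
  induction k with
  | zero =>
    intro j hj hjn
    have := hmap j hjn (by omega)
    omega
  | succ k ih =>
    intro j hj hjn
    have hj' : j = (n:ℤ) - k - 1 := by push_cast at hj; omega
    have h1 : w (j + 1) ≤ j + 1 := ih (j + 1) (by omega) (by omega)
    have h2 : w j < w (j + 1) := hmono j hjn (by omega)
    omega

lemma incr_eq_id (n : ℕ) (w : ℤ → ℤ)
    (hmap : ∀ j : ℤ, -(n:ℤ) ≤ j → j ≤ n → -(n:ℤ) ≤ w j ∧ w j ≤ n)
    (hmono : ∀ i : ℤ, -(n:ℤ) ≤ i → i + 1 ≤ n → w i < w (i + 1)) :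
    ∀ j : ℤ, -(n:ℤ) ≤ j → j ≤ n → w j = j := by
  intro j h1 h2
  have hg := ge_of_incr n w hmap hmono (j + n).toNat j (by omega) h2
  have hl := le_of_incr n w hmap hmono ((n:ℤ) - j).toNat j (by omega) h1
  omega
/-- The identity is the unique element with `L = 0`, and the longest element
`w₀ = -Id` is the unique element attaining the maximum `L`-value `n(n+1)/2`. -/
theorem L_eq_zero_iff_id (n : ℕ) (w : ℤ → ℤ) (hw : IsSigned n w) :
    (Lstat n w = 0 ↔ ∀ j ∈ Set.Icc (-(n : ℤ)) n, w j = j) ∧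
    Lstat n w ≤ n * (n + 1) / 2 ∧
    (Lstat n w = n * (n + 1) / 2 ↔ ∀ j ∈ Set.Icc (-(n : ℤ)) n, w j = -j) := by
  obtain ⟨hodd, hbij⟩ := hw
  have hmap : ∀ j : ℤ, -(n:ℤ) ≤ j → j ≤ n → -(n:ℤ) ≤ w j ∧ w j ≤ n := by
    intro j h1 h2
    exact Set.mem_Icc.1 (hbij.mapsTo (Set.mem_Icc.2 ⟨h1, h2⟩))
  have hinj : ∀ i j : ℤ, -(n:ℤ) ≤ i → i ≤ n → -(n:ℤ) ≤ j → j ≤ n → w i = w j → i = j := by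
    intro i j hi1 hi2 hj1 hj2 h
    exact hbij.injOn (Set.mem_Icc.2 ⟨hi1, hi2⟩) (Set.mem_Icc.2 ⟨hj1, hj2⟩) h
  have hS := S_card n
  set S := ((Finset.Icc (-(n:ℤ)) n ×ˢ Finset.Icc (-(n:ℤ)) n).filter
      fun p => p.1 < p.2 ∧ p.1 % 2 ≠ p.2 % 2) with hSdef
  have hsub : Lset n w ⊆ S := by
    intro p hp
    simp only [Lset, Finset.mem_filter] at hp
    simp only [hSdef, Finset.mem_filter]
    exact ⟨hp.1, hp.2.1, hp.2.2.2⟩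
  have hcard_le : (Lset n w).card ≤ n * (n + 1) := hS ▸ Finset.card_le_card hsub
  have hpair : ∀ p : ℤ × ℤ, p ∈ Lset n w → 1 < (Lset n w).card := by
    rintro ⟨x, y⟩ hp
    have hp' := hp
    simp only [Lset, Finset.mem_filter, Finset.mem_product, Finset.mem_Icc] at hp'
    have hq : ((-y : ℤ), (-x : ℤ)) ∈ Lset n w := by
      simp only [Lset, Finset.mem_filter, Finset.mem_product, Finset.mem_Icc]
      refine ⟨⟨⟨by omega, by omega⟩, by omega, by omega⟩, by omega, ?_, by omega⟩
      rw [hodd x, hodd y]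
      omega
    refine Finset.one_lt_card.2 ⟨(x, y), hp, ((-y : ℤ), (-x : ℤ)), hq, ?_⟩
    intro h
    have h1 : x = -y := congrArg Prod.fst h
    omega
  have part1 : Lstat n w = 0 ↔ ∀ j ∈ Set.Icc (-(n:ℤ)) n, w j = j := by
    constructor
    · intro h0
      have hcard : (Lset n w).card ≤ 1 := by
        unfold Lstat at h0
        omega
      have hempty : Lset n w = ∅ := by
        rw [Finset.eq_empty_iff_forall_notMem]
        intro p hp
        have := hpair p hp
        omega
      have hmono : ∀ i : ℤ, -(n:ℤ) ≤ i → i + 1 ≤ n → w i < w (i + 1) := by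
        intro i h1 h2
        have hle : ¬ (w (i + 1) < w i) := by
          intro hlt
          have hmem : ((i : ℤ), (i + 1 : ℤ)) ∈ Lset n w := by
            simp only [Lset, Finset.mem_filter, Finset.mem_product, Finset.mem_Icc]
            exact ⟨⟨⟨by omega, by omega⟩, by omega, by omega⟩, by omega, hlt, by omega⟩
          rw [hempty] at hmem
          exact Finset.notMem_empty _ hmem
        have hne : w i ≠ w (i + 1) := by
          intro he
          have := hinj i (i + 1) h1 (by omega) (by omega) h2 he
          omega
        omega
      intro j hj
      rw [Set.mem_Icc] at hj
      exact incr_eq_id n w hmap hmono j hj.1 hj.2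
    · intro hid
      have hempty : Lset n w = ∅ := by
        rw [Finset.eq_empty_iff_forall_notMem]
        intro p hp
        simp only [Lset, Finset.mem_filter, Finset.mem_product, Finset.mem_Icc] at hp
        have e1 := hid p.1 (Set.mem_Icc.2 ⟨hp.1.1.1, hp.1.1.2⟩)
        have e2 := hid p.2 (Set.mem_Icc.2 ⟨hp.1.2.1, hp.1.2.2⟩)
        omega
      unfold Lstat
      rw [hempty]
      simp
  have part2 : Lstat n w ≤ n * (n + 1) / 2 := by
    unfold Lstat
    exact Nat.div_le_div_right hcard_le
  have part3 : Lstat n w = n * (n + 1) / 2 ↔ ∀ j ∈ Set.Icc (-(n:ℤ)) n, w j = -j := by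
    constructor
    · intro h
      have heven : (n * (n + 1)) % 2 = 0 := Nat.even_iff.mp (Nat.even_mul_succ_self n)
      have hcard : (Lset n w).card = n * (n + 1) := by
        unfold Lstat at h
        generalize hGen : n * (n + 1) = M at h hcard_le heven ⊢
        omega
      have hfull : Lset n w = S :=
        Finset.eq_of_subset_of_card_le hsub (by rw [hS, hcard])
      have hmono : ∀ i : ℤ, -(n:ℤ) ≤ i → i + 1 ≤ n →
          (fun j => - w j) i < (fun j => - w j) (i + 1) := by
        intro i h1 h2
        have hmem : ((i : ℤ), (i + 1 : ℤ)) ∈ Lset n w := by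
          rw [hfull]
          simp only [hSdef, Finset.mem_filter, Finset.mem_product, Finset.mem_Icc]
          exact ⟨⟨⟨by omega, by omega⟩, by omega, by omega⟩, by omega, by omega⟩
        simp only [Lset, Finset.mem_filter] at hmem
        have := hmem.2.2.1
        simp only
        omega
      have hmap' : ∀ j : ℤ, -(n:ℤ) ≤ j → j ≤ n →
          -(n:ℤ) ≤ (fun j => - w j) j ∧ (fun j => - w j) j ≤ n := by
        intro j h1 h2
        have := hmap j h1 h2
        simp only
        omega
      intro j hj
      rw [Set.mem_Icc] at hj
      have := incr_eq_id n (fun j => - w j) hmap' hmono j hj.1 hj.2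
      omega
    · intro hid
      have hfull : Lset n w = S := by
        ext p
        simp only [Lset, hSdef, Finset.mem_filter, Finset.mem_product, Finset.mem_Icc]
        constructor
        · rintro ⟨a, b, c, d⟩
          exact ⟨a, b, d⟩
        · rintro ⟨a, b, c⟩
          have e1 := hid p.1 (Set.mem_Icc.2 ⟨a.1.1, a.1.2⟩)
          have e2 := hid p.2 (Set.mem_Icc.2 ⟨a.2.1, a.2.2⟩)
          exact ⟨a, b, by omega, c⟩
      unfold Lstat
      rw [hfull, hS]
  exact ⟨part1, part2, part3⟩
end

section
/- For all n ∈ ℕ and all I ⊆ {0,1,…,n−1}, the signed generating function Σ_{w ∈ B_n, D(w) ⊆ I} (−1)^{l(w)} X^{L(w)} equals Σ_{w ∈ C_{n,0}, D(w) ⊆ I} (−1)^{l(w)} X^{L(w)}, where C_{n,0} is the set of even chessboard elements, i.e. signed permutations w with |w(j)| ≡ j mod 2 for all j ∈ [n]. -/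
open Finset Polynomial

section Generic

lemma card_filter_insert_pt (s : Finset (ℤ×ℤ)) (P : ℤ×ℤ) (hP : P ∈ s)
    (pred : ℤ×ℤ → Prop) [DecidablePred pred] :
    (s.filter pred).card = ((s.erase P).filter pred).card + if pred P then 1 else 0 := by
  conv_lhs => rw [← Finset.insert_erase hP]
  rw [Finset.filter_insert]
  split_ifs
  · rw [Finset.card_insert_of_notMem
      (fun hmem => (Finset.mem_erase.mp (Finset.mem_filter.mp hmem).1).1 rfl)]
  · rfl

variable {n : ℕ} {u v : ℤ → ℤ} {a p q : ℤ}

/-- master comparison lemma for the swap move -/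
lemma swap_cmp (hu : ∀ j, u (-j) = - u j) (hv : ∀ j, v (-j) = - v j)
    (ha : 1 ≤ a)
    (hP : (u p = a ∧ v p = a + 1) ∨ (u p = -a ∧ v p = -(a+1)))
    (hQ : (u q = a + 1 ∧ v q = a) ∨ (u q = -(a+1) ∧ v q = -a))
    (heq : ∀ j, j ≠ p → j ≠ q → j ≠ -p → j ≠ -q → v j = u j)
    (hoth : ∀ j, 1 ≤ j → j ≤ (n:ℤ) → j ≠ p → j ≠ q →
      u j ≠ a ∧ u j ≠ -a ∧ u j ≠ a+1 ∧ u j ≠ -(a+1)) :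
    ∀ j k, -(n:ℤ) ≤ j → j ≤ n → -(n:ℤ) ≤ k → k ≤ n →
      j ≠ p → j ≠ q → j ≠ -p → j ≠ -q →
      ((u j < u k ↔ v j < v k) ∧ (u k < u j ↔ v k < v j) ∧
        (u j + u k < 0 ↔ v j + v k < 0)) := by
  intro j k hj1 hj2 hk1 hk2 hjp hjq hjp' hjq'
  have hvj : v j = u j := heq j hjp hjq hjp' hjq'
  have hbj : u j = 0 ∨ (u j ≠ a ∧ u j ≠ -a ∧ u j ≠ a+1 ∧ u j ≠ -(a+1)) := by
    rcases lt_trichotomy j 0 with h | h | h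
    · have h1 := hu (-j)
      have h2 := hoth (-j) (by omega) (by omega) (by omega) (by omega)
      rw [neg_neg] at h1
      right; omega
    · subst h
      have h1 := hu 0
      rw [neg_zero] at h1
      left; omega
    · right; exact hoth j (by omega) hj2 hjp hjq
  by_cases hk : k = p ∨ k = q ∨ k = -p ∨ k = -q
  · have hval : (u k = a ∧ v k = a+1) ∨ (u k = -a ∧ v k = -(a+1)) ∨
        (u k = a+1 ∧ v k = a) ∨ (u k = -(a+1) ∧ v k = -a) := by
      rcases hk with rfl | rfl | rfl | rfl
      · tauto
      · tauto
      · have h1 := hu p; have h2 := hv p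
        rcases hP with ⟨e1, e2⟩ | ⟨e1, e2⟩ <;> omega
      · have h1 := hu q; have h2 := hv q
        rcases hQ with ⟨e1, e2⟩ | ⟨e1, e2⟩ <;> omega
    rcases hval with ⟨e1,e2⟩|⟨e1,e2⟩|⟨e1,e2⟩|⟨e1,e2⟩ <;> omega
  · push_neg at hk
    have hvk : v k = u k := heq k hk.1 hk.2.1 hk.2.2.1 hk.2.2.2
    omega

end Generic

section SwapStats
variable {n : ℕ} {u v : ℤ → ℤ} {a p q : ℤ}

variable (hu : ∀ j, u (-j) = - u j) (hv : ∀ j, v (-j) = - v j)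
    (ha : 1 ≤ a)
    (hp : 1 ≤ p ∧ p ≤ (n:ℤ)) (hq : 1 ≤ q ∧ q ≤ (n:ℤ))
    (hpq : p ≠ q) (hpar : p % 2 = q % 2)
    (hP : (u p = a ∧ v p = a + 1) ∨ (u p = -a ∧ v p = -(a+1)))
    (hQ : (u q = a + 1 ∧ v q = a) ∨ (u q = -(a+1) ∧ v q = -a))
    (heq : ∀ j, j ≠ p → j ≠ q → j ≠ -p → j ≠ -q → v j = u j)
    (hoth : ∀ j, 1 ≤ j → j ≤ (n:ℤ) → j ≠ p → j ≠ q →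
      u j ≠ a ∧ u j ≠ -a ∧ u j ≠ a+1 ∧ u j ≠ -(a+1))

include hu hv ha hp hq hpq hpar hP hQ heq hoth

set_option linter.unusedSectionVars false

lemma swap_Dset : Dset n v = Dset n u := by
  unfold Dset
  apply Finset.filter_congr
  intro i hi
  simp only [Finset.mem_Ico] at hi
  have key := swap_cmp hu hv ha hP hQ heq hoth
  by_cases h1 : i = p ∨ i = q
  · have h2 : i + 1 ≠ p ∧ i + 1 ≠ q := by omega
    have := key (i+1) i (by omega) (by omega) (by omega) (by omega)
      h2.1 h2.2 (by omega) (by omega)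
    simpa using this.1.symm
  · by_cases h2 : i + 1 = p ∨ i + 1 = q
    · have := key i (i+1) (by omega) (by omega) (by omega) (by omega)
        (by omega) (by omega) (by omega) (by omega)
      simpa using this.2.1.symm
    · rw [heq i (by omega) (by omega) (by omega) (by omega),
        heq (i+1) (by omega) (by omega) (by omega) (by omega)]

lemma swap_Lset : Lset n v = Lset n u := by
  unfold Lset
  apply Finset.filter_congr
  rintro ⟨i, j⟩ hij
  simp only [Finset.mem_product, Finset.mem_Icc] at hij
  have key := swap_cmp hu hv ha hP hQ heq hoth
  show i < j ∧ v j < v i ∧ i % 2 ≠ j % 2 ↔ i < j ∧ u j < u i ∧ i % 2 ≠ j % 2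
  constructor <;> rintro ⟨h1, h2, h3⟩ <;> refine ⟨h1, ?_, h3⟩
  all_goals
    by_cases hi : i = p ∨ i = q ∨ i = -p ∨ i = -q
    · have hjg : j ≠ p ∧ j ≠ q ∧ j ≠ -p ∧ j ≠ -q := by omega
      have := key j i hij.2.1 hij.2.2 hij.1.1 hij.1.2 hjg.1 hjg.2.1 hjg.2.2.1 hjg.2.2.2
      omega
    · push_neg at hi
      have := key i j hij.1.1 hij.1.2 hij.2.1 hij.2.2 hi.1 hi.2.1 hi.2.2.1 hi.2.2.2
      omega

lemma swap_negStat : negStat n v = negStat n u := by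
  unfold negStat
  congr 1
  apply Finset.filter_congr
  intro i hi
  simp only [Finset.mem_Icc] at hi
  by_cases h1 : i = p
  · subst h1; rcases hP with ⟨e1, e2⟩ | ⟨e1, e2⟩ <;> constructor <;> intro <;> omega
  · by_cases h2 : i = q
    · subst h2; rcases hQ with ⟨e1, e2⟩ | ⟨e1, e2⟩ <;> constructor <;> intro <;> omega
    · rw [heq i h1 h2 (by omega) (by omega)]

lemma swap_len_parity : (lenStat n v + lenStat n u) % 2 = 1 := by
  have key := swap_cmp hu hv ha hP hQ heq hoth
  unfold lenStat invStat nspStat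
  set s : Finset (ℤ×ℤ) := Finset.Icc (1:ℤ) n ×ˢ Finset.Icc (1:ℤ) n with hs
  set P : ℤ×ℤ := if p < q then (p, q) else (q, p) with hPdef
  have hPmem : P ∈ s := by
    rw [hPdef]; split_ifs <;> simp only [hs, Finset.mem_product, Finset.mem_Icc] <;>
      constructor <;> omega
  have hPP : ∀ i j : ℤ, i < j → (i = p ∨ i = q) → (j = p ∨ j = q) → (i, j) = P := by
    rintro i j hlt (rfl | rfl) (rfl | rfl)
    · omega
    · rw [hPdef, if_pos hlt]
    · rw [hPdef, if_neg (by omega)]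
    · omega
  have hboth : ∀ w : ℤ → ℤ, ((s.erase P).filter fun x => x.1 < x.2 ∧ w x.2 < w x.1) =
      ((s.erase P).filter fun x => x.1 < x.2 ∧ u x.2 < u x.1) →
      True := fun _ _ => trivial
  have hiff : ∀ i j : ℤ, (i, j) ∈ s.erase P → i < j →
      ((v j < v i ↔ u j < u i) ∧ (v i + v j < 0 ↔ u i + u j < 0)) := by
    intro i j hmem hlt
    have hne := (Finset.mem_erase.mp hmem).1
    have hij' := Finset.mem_of_mem_erase hmem
    simp only [hs, Finset.mem_product, Finset.mem_Icc] at hij'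
    by_cases hi : i = p ∨ i = q
    · have hjg : j ≠ p ∧ j ≠ q := by
        constructor <;> intro hj
        · exact hne (hPP i j hlt hi (Or.inl hj))
        · exact hne (hPP i j hlt hi (Or.inr hj))
      have := key j i (by omega) (by omega) (by omega) (by omega) hjg.1 hjg.2
        (by omega) (by omega)
      omega
    · push_neg at hi
      have := key i j (by omega) (by omega) (by omega) (by omega) hi.1 hi.2
        (by omega) (by omega)
      omega
  have hinv : ((s.erase P).filter fun x => x.1 < x.2 ∧ v x.2 < v x.1) =
      ((s.erase P).filter fun x => x.1 < x.2 ∧ u x.2 < u x.1) := by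
    apply Finset.filter_congr
    rintro ⟨i, j⟩ hij
    show i < j ∧ v j < v i ↔ i < j ∧ u j < u i
    constructor <;> rintro ⟨h1, h2⟩ <;> exact ⟨h1, by have := hiff i j hij h1; omega⟩
  have hnsp : ((s.erase P).filter fun x => x.1 < x.2 ∧ v x.1 + v x.2 < 0) =
      ((s.erase P).filter fun x => x.1 < x.2 ∧ u x.1 + u x.2 < 0) := by
    apply Finset.filter_congr
    rintro ⟨i, j⟩ hij
    show i < j ∧ v i + v j < 0 ↔ i < j ∧ u i + u j < 0
    constructor <;> rintro ⟨h1, h2⟩ <;> exact ⟨h1, by have := hiff i j hij h1; omega⟩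
  have e1 := card_filter_insert_pt s P hPmem (fun x => x.1 < x.2 ∧ v x.2 < v x.1)
  have e2 := card_filter_insert_pt s P hPmem (fun x => x.1 < x.2 ∧ u x.2 < u x.1)
  have e3 := card_filter_insert_pt s P hPmem (fun x => x.1 < x.2 ∧ v x.1 + v x.2 < 0)
  have e4 := card_filter_insert_pt s P hPmem (fun x => x.1 < x.2 ∧ u x.1 + u x.2 < 0)
  have hneg := swap_negStat hu hv ha hp hq hpq hpar hP hQ heq hoth
  rw [e1, e2, e3, e4, hinv, hnsp, hneg]
  have hPval : (P.1 = p ∧ P.2 = q ∧ p < q) ∨ (P.1 = q ∧ P.2 = p ∧ q < p) := by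
    rw [hPdef]; split_ifs with h
    · left; exact ⟨rfl, rfl, h⟩
    · right; exact ⟨rfl, rfl, by omega⟩
  rcases hPval with ⟨ep, eq', hlt⟩ | ⟨ep, eq', hlt⟩ <;> rw [ep, eq'] <;>
    rcases hP with ⟨f1, f2⟩ | ⟨f1, f2⟩ <;> rcases hQ with ⟨g1, g2⟩ | ⟨g1, g2⟩ <;>
    split_ifs <;> omega

end SwapStats

section FlipStats
variable {n : ℕ} {u v : ℤ → ℤ} {r : ℤ}

variable (hu : ∀ j, u (-j) = - u j) (hv : ∀ j, v (-j) = - v j)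
    (hr : 2 ≤ r ∧ r ≤ (n:ℤ)) (hre : r % 2 = 0)
    (hR : (u r = 1 ∧ v r = -1) ∨ (u r = -1 ∧ v r = 1))
    (heq : ∀ j, j ≠ r → j ≠ -r → v j = u j)
    (hoth : ∀ j, 1 ≤ j → j ≤ (n:ℤ) → j ≠ r → 2 ≤ u j ∨ u j ≤ -2)

include hu hv hr hre hR heq hoth

set_option linter.unusedSectionVars false

lemma flip_cmp :
    ∀ j k, -(n:ℤ) ≤ j → j ≤ n → -(n:ℤ) ≤ k → k ≤ n →
      j ≠ r → j ≠ -r → j ≠ 0 →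
      ((u j < u k ↔ v j < v k) ∧ (u k < u j ↔ v k < v j) ∧
        (u j + u k < 0 ↔ v j + v k < 0)) := by
  intro j k hj1 hj2 hk1 hk2 hjr hjr' hj0
  have hvj : v j = u j := heq j hjr hjr'
  have hbj : 2 ≤ u j ∨ u j ≤ -2 := by
    rcases lt_trichotomy j 0 with h | h | h
    · have h1 := hu (-j)
      rw [neg_neg] at h1
      have h2 := hoth (-j) (by omega) (by omega) (by omega)
      omega
    · omega
    · exact hoth j (by omega) hj2 hjr
  by_cases hk : k = r ∨ k = -r
  · have hval : (u k = 1 ∧ v k = -1) ∨ (u k = -1 ∧ v k = 1) := by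
      rcases hk with rfl | rfl
      · exact hR
      · have h1 := hu r; have h2 := hv r
        rcases hR with ⟨e1, e2⟩ | ⟨e1, e2⟩ <;> omega
    rcases hval with ⟨e1, e2⟩ | ⟨e1, e2⟩ <;> omega
  · push_neg at hk
    have hvk : v k = u k := heq k hk.1 hk.2
    omega

lemma flip_Dset : Dset n v = Dset n u := by
  unfold Dset
  apply Finset.filter_congr
  intro i hi
  simp only [Finset.mem_Ico] at hi
  have key := flip_cmp hu hv hr hre hR heq hoth
  by_cases h1 : i = r
  · have := key (i+1) i (by omega) (by omega) (by omega) (by omega)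
      (by omega) (by omega) (by omega)
    simpa using this.1.symm
  · by_cases h2 : i + 1 = r
    · have := key i (i+1) (by omega) (by omega) (by omega) (by omega)
        (by omega) (by omega) (by omega)
      simpa using this.2.1.symm
    · rw [heq i (by omega) (by omega), heq (i+1) (by omega) (by omega)]

lemma flip_Lset : Lset n v = Lset n u := by
  unfold Lset
  apply Finset.filter_congr
  rintro ⟨i, j⟩ hij
  simp only [Finset.mem_product, Finset.mem_Icc] at hij
  have key := flip_cmp hu hv hr hre hR heq hoth
  show i < j ∧ v j < v i ∧ i % 2 ≠ j % 2 ↔ i < j ∧ u j < u i ∧ i % 2 ≠ j % 2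
  constructor <;> rintro ⟨h1, h2, h3⟩ <;> refine ⟨h1, ?_, h3⟩
  all_goals
    by_cases hi : i = r ∨ i = -r
    · have := key j i (by omega) (by omega) (by omega) (by omega)
        (by omega) (by omega) (by omega)
      omega
    · by_cases hj : j = r ∨ j = -r
      · have := key i j (by omega) (by omega) (by omega) (by omega)
          (by omega) (by omega) (by omega)
        omega
      · rw [heq i (by omega) (by omega), heq j (by omega) (by omega)] at *
        omega

lemma flip_invStat : invStat n v = invStat n u := by
  unfold invStat
  congr 1
  apply Finset.filter_congr
  rintro ⟨i, j⟩ hij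
  simp only [Finset.mem_product, Finset.mem_Icc] at hij
  have key := flip_cmp hu hv hr hre hR heq hoth
  show i < j ∧ v j < v i ↔ i < j ∧ u j < u i
  constructor <;> rintro ⟨h1, h2⟩ <;> refine ⟨h1, ?_⟩
  all_goals
    by_cases hi : i = r
    · have := key j i (by omega) (by omega) (by omega) (by omega)
        (by omega) (by omega) (by omega)
      omega
    · by_cases hj : j = r
      · have := key i j (by omega) (by omega) (by omega) (by omega)
          (by omega) (by omega) (by omega)
        omega
      · rw [heq i (by omega) (by omega), heq j (by omega) (by omega)] at *
        omega

lemma flip_nspStat : nspStat n v = nspStat n u := by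
  unfold nspStat
  congr 1
  apply Finset.filter_congr
  rintro ⟨i, j⟩ hij
  simp only [Finset.mem_product, Finset.mem_Icc] at hij
  have key := flip_cmp hu hv hr hre hR heq hoth
  show i < j ∧ v i + v j < 0 ↔ i < j ∧ u i + u j < 0
  constructor <;> rintro ⟨h1, h2⟩ <;> refine ⟨h1, ?_⟩
  all_goals
    by_cases hi : i = r
    · have := key j i (by omega) (by omega) (by omega) (by omega)
        (by omega) (by omega) (by omega)
      omega
    · by_cases hj : j = r
      · have := key i j (by omega) (by omega) (by omega) (by omega)
          (by omega) (by omega) (by omega)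
        omega
      · rw [heq i (by omega) (by omega), heq j (by omega) (by omega)] at *
        omega

lemma flip_len_parity : (lenStat n v + lenStat n u) % 2 = 1 := by
  have hinv := flip_invStat hu hv hr hre hR heq hoth
  have hnsp := flip_nspStat hu hv hr hre hR heq hoth
  have hneg : (negStat n v + negStat n u) % 2 = 1 := by
    unfold negStat
    have hmem : r ∈ Finset.Icc (1:ℤ) n := by simp only [Finset.mem_Icc]; omega
    have hbase : ((Finset.Icc (1:ℤ) n).erase r).filter (fun i => v i < 0) =
        ((Finset.Icc (1:ℤ) n).erase r).filter (fun i => u i < 0) := by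
      apply Finset.filter_congr
      intro i hi
      have hne := (Finset.mem_erase.mp hi).1
      have hmem' := Finset.mem_of_mem_erase hi
      simp only [Finset.mem_Icc] at hmem'
      rw [heq i hne (by omega)]
    have e1 : ((Finset.Icc (1:ℤ) n).filter (fun i => v i < 0)).card =
        (((Finset.Icc (1:ℤ) n).erase r).filter (fun i => v i < 0)).card +
          if v r < 0 then 1 else 0 := by
      conv_lhs => rw [← Finset.insert_erase hmem]
      rw [Finset.filter_insert]
      split_ifs
      · rw [Finset.card_insert_of_notMem
          (fun hmem2 => (Finset.mem_erase.mp (Finset.mem_filter.mp hmem2).1).1 rfl)]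
      · rfl
    have e2 : ((Finset.Icc (1:ℤ) n).filter (fun i => u i < 0)).card =
        (((Finset.Icc (1:ℤ) n).erase r).filter (fun i => u i < 0)).card +
          if u r < 0 then 1 else 0 := by
      conv_lhs => rw [← Finset.insert_erase hmem]
      rw [Finset.filter_insert]
      split_ifs
      · rw [Finset.card_insert_of_notMem
          (fun hmem2 => (Finset.mem_erase.mp (Finset.mem_filter.mp hmem2).1).1 rfl)]
      · rfl
    rw [e1, e2, hbase]
    rcases hR with ⟨f1, f2⟩ | ⟨f1, f2⟩ <;> split_ifs <;> omega
  unfold lenStat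
  omega

end FlipStats

namespace HypOct
variable {n : ℕ}

lemma fn_eval_idx (w : HypOct n) {j : ℤ} (i : Fin n) (hi : (i : ℤ) = j - 1) :
    w.fn j = (if w.2 i then -1 else 1) * ((w.1 i : ℤ) + 1) := by
  have h0 : (0:ℤ) ≤ (i : ℤ) := Int.natCast_nonneg _
  have hlt : (i : ℤ) < n := by exact_mod_cast i.isLt
  unfold HypOct.fn
  rw [dif_pos ⟨by omega, by omega⟩]
  have e : (⟨(j - 1).toNat, by omega⟩ : Fin n) = i := by
    apply Fin.ext
    simp only []
    omega
  rw [e]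

lemma fn_eval_negidx (w : HypOct n) {j : ℤ} (i : Fin n) (hi : (i : ℤ) = -j - 1) :
    w.fn j = -((if w.2 i then -1 else 1) * ((w.1 i : ℤ) + 1)) := by
  have h0 : (0:ℤ) ≤ (i : ℤ) := Int.natCast_nonneg _
  have hlt : (i : ℤ) < n := by exact_mod_cast i.isLt
  unfold HypOct.fn
  rw [dif_neg (by omega), dif_pos ⟨by omega, by omega⟩]
  have e : (⟨(-j - 1).toNat, by omega⟩ : Fin n) = i := by
    apply Fin.ext
    simp only []
    omega
  rw [e]

lemma fn_out (w : HypOct n) {j : ℤ} (h1 : ¬(1 ≤ j ∧ j ≤ (n:ℤ)))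
    (h2 : ¬(1 ≤ -j ∧ -j ≤ (n:ℤ))) : w.fn j = 0 := by
  unfold HypOct.fn
  rw [dif_neg h1, dif_neg h2]

lemma fn_neg (w : HypOct n) (j : ℤ) : w.fn (-j) = - w.fn j := by
  by_cases h1 : 1 ≤ j ∧ j ≤ (n:ℤ)
  · set i : Fin n := ⟨(j-1).toNat, by omega⟩ with hidef
    have hi : (i : ℤ) = j - 1 := by simp [hidef]; omega
    rw [fn_eval_idx w i hi, fn_eval_negidx w i (by omega)]
  · by_cases h2 : 1 ≤ -j ∧ -j ≤ (n:ℤ)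
    · set i : Fin n := ⟨(-j-1).toNat, by omega⟩ with hidef
      have hi : (i : ℤ) = -j - 1 := by simp [hidef]; omega
      rw [fn_eval_negidx w i hi, fn_eval_idx w i (by omega)]
      ring
    · rw [fn_out w h1 h2, fn_out w (by omega) (by omega), neg_zero]

end HypOct

def PA (n : ℕ) (σ : Equiv.Perm (Fin n)) (c : ℕ) : Prop :=
  ∃ h : c + 1 < n, ((σ⁻¹ ⟨c, Nat.lt_of_succ_lt h⟩ : Fin n) : ℕ) % 2 =
    ((σ⁻¹ ⟨c + 1, h⟩ : Fin n) : ℕ) % 2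

instance PA.decidable (n : ℕ) (σ : Equiv.Perm (Fin n)) : DecidablePred (PA n σ) :=
  fun _ => exists_prop_decidable _

open Classical in
noncomputable def phi {n : ℕ} (w : HypOct n) : HypOct n :=
  if h : ∃ c, PA n w.1 c then
    (Equiv.swap ⟨Nat.find h, Nat.lt_of_succ_lt (Nat.find_spec h).choose⟩
       ⟨Nat.find h + 1, (Nat.find_spec h).choose⟩ * w.1, w.2)
  else if h0 : 0 < n then
    (w.1, fun i => if i = w.1⁻¹ ⟨0, h0⟩ then !(w.2 i) else w.2 i)
  else w

theorem Equiv.Perm.apply_inv_self {α : Type*} (f : Equiv.Perm α) (x : α) : f (f⁻¹ x) = x :=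
  Equiv.apply_symm_apply f x

theorem Equiv.Perm.inv_apply_self {α : Type*} (f : Equiv.Perm α) (x : α) : f⁻¹ (f x) = x :=
  Equiv.symm_apply_apply f x

lemma PA_not_chess {n : ℕ} {σ : Equiv.Perm (Fin n)} {c : ℕ} (hPA : PA n σ c) :
    ¬ ∀ i : Fin n, (σ i : ℕ) % 2 = (i : ℕ) % 2 := by
  obtain ⟨hc, hpar⟩ := hPA
  intro hall
  have h1 := hall (σ⁻¹ ⟨c, Nat.lt_of_succ_lt hc⟩)
  have h2 := hall (σ⁻¹ ⟨c + 1, hc⟩)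
  rw [Equiv.Perm.apply_inv_self] at h1 h2
  simp only [] at h1 h2
  omega

lemma dichotomy {n : ℕ} (σ : Equiv.Perm (Fin n)) (hn : 0 < n)
    (hA : ∀ c, ¬ PA n σ c)
    (hnc : ¬ ∀ i : Fin n, (σ i : ℕ) % 2 = (i : ℕ) % 2) :
    ((σ⁻¹ ⟨0, hn⟩ : Fin n) : ℕ) % 2 = 1 := by
  by_contra h0
  apply hnc
  have key : ∀ k, ∀ hk : k < n, ((σ⁻¹ ⟨k, hk⟩ : Fin n) : ℕ) % 2 = k % 2 := by
    intro k
    induction k with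
    | zero =>
      intro hk
      have e : (⟨0, hk⟩ : Fin n) = ⟨0, hn⟩ := rfl
      rw [e]
      omega
    | succ m ih =>
      intro hk
      have hm := ih (Nat.lt_of_succ_lt hk)
      have hPA := hA m
      rw [PA] at hPA
      push_neg at hPA
      have hd := hPA hk
      omega
  intro i
  have h := key (σ i) (σ i).isLt
  rw [show (⟨(σ i : ℕ), (σ i).isLt⟩ : Fin n) = σ i from rfl,
    Equiv.Perm.inv_apply_self] at h
  omega

-- Case A bundle
section CaseA
variable {n : ℕ} (w : HypOct n) (h : ∃ c, PA n w.1 c)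

lemma phiA_eq : phi w = (Equiv.swap
    ⟨Nat.find h, Nat.lt_of_succ_lt (Nat.find_spec h).choose⟩
    ⟨Nat.find h + 1, (Nat.find_spec h).choose⟩ * w.1, w.2) := by
  rw [phi, dif_pos h]

include h in
lemma phiA_bundle :
    Dset n (HypOct.fn (phi w)) = Dset n (HypOct.fn w) ∧
    Lset n (HypOct.fn (phi w)) = Lset n (HypOct.fn w) ∧
    (lenStat n (HypOct.fn (phi w)) + lenStat n (HypOct.fn w)) % 2 = 1 := by
  obtain ⟨hc, hpar0⟩ := Nat.find_spec h
  set c := Nat.find h with hcdef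
  set C : Fin n := ⟨c, Nat.lt_of_succ_lt hc⟩ with hCdef
  set C' : Fin n := ⟨c + 1, hc⟩ with hC'def
  have hphi1 : (phi w).1 = Equiv.swap C C' * w.1 := by rw [phiA_eq w h]
  have hphi2 : (phi w).2 = w.2 := by rw [phiA_eq w h]
  set pI : Fin n := w.1⁻¹ C with hpIdef
  set qI : Fin n := w.1⁻¹ C' with hqIdef
  set p : ℤ := ((pI : ℕ) : ℤ) + 1 with hpdef
  set q : ℤ := ((qI : ℕ) : ℤ) + 1 with hqdef
  set a : ℤ := ((c : ℕ) : ℤ) + 1 with hadef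
  have hCval : (C : ℕ) = c := rfl
  have hC'val : (C' : ℕ) = c + 1 := rfl
  have hCne : C ≠ C' := by
    intro e; have := congrArg Fin.val e; rw [hCval, hC'val] at this; omega
  have hpIne : pI ≠ qI := fun e => hCne (w.1⁻¹.injective e)
  have hpIqI : (pI : ℕ) ≠ (qI : ℕ) := fun e => hpIne (Fin.ext e)
  have hu := HypOct.fn_neg w
  have hv := HypOct.fn_neg (phi w)
  have ha : (1:ℤ) ≤ a := by rw [hadef]; omega
  have hplt : (pI : ℕ) < n := pI.isLt
  have hqlt : (qI : ℕ) < n := qI.isLt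
  have hp : 1 ≤ p ∧ p ≤ (n:ℤ) := by constructor <;> [rw [hpdef]; rw [hpdef]] <;> omega
  have hq : 1 ≤ q ∧ q ≤ (n:ℤ) := by constructor <;> [rw [hqdef]; rw [hqdef]] <;> omega
  have hpq : p ≠ q := by rw [hpdef, hqdef]; omega
  have hpar : p % 2 = q % 2 := by
    rw [hpdef, hqdef]
    have h0 : (pI : ℕ) % 2 = (qI : ℕ) % 2 := hpar0
    omega
  have hσp : w.1 pI = C := Equiv.Perm.apply_inv_self w.1 C
  have hσq : w.1 qI = C' := Equiv.Perm.apply_inv_self w.1 C'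
  have hσ'p : (phi w).1 pI = C' := by
    rw [hphi1, Equiv.Perm.mul_apply, hσp, Equiv.swap_apply_left]
  have hσ'q : (phi w).1 qI = C := by
    rw [hphi1, Equiv.Perm.mul_apply, hσq, Equiv.swap_apply_right]
  have hip : ((pI : ℕ) : ℤ) = p - 1 := by rw [hpdef]; ring
  have hiq : ((qI : ℕ) : ℤ) = q - 1 := by rw [hqdef]; ring
  have eup := HypOct.fn_eval_idx w pI hip
  have evp := HypOct.fn_eval_idx (phi w) pI hip
  have euq := HypOct.fn_eval_idx w qI hiq
  have evq := HypOct.fn_eval_idx (phi w) qI hiq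
  rw [hσp] at eup
  rw [hσq] at euq
  rw [hσ'p, hphi2] at evp
  rw [hσ'q, hphi2] at evq
  have hP : (HypOct.fn w p = a ∧ HypOct.fn (phi w) p = a + 1) ∨
      (HypOct.fn w p = -a ∧ HypOct.fn (phi w) p = -(a+1)) := by
    by_cases hb : w.2 pI = true
    · rw [if_pos hb] at eup evp
      right
      refine ⟨?_, ?_⟩ <;> [rw [eup]; rw [evp]] <;>
        simp only [hadef, hCval, hC'val] <;> push_cast <;> ring
    · rw [if_neg hb] at eup evp
      left
      refine ⟨?_, ?_⟩ <;> [rw [eup]; rw [evp]] <;>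
        simp only [hadef, hCval, hC'val] <;> push_cast <;> ring
  have hQ : (HypOct.fn w q = a + 1 ∧ HypOct.fn (phi w) q = a) ∨
      (HypOct.fn w q = -(a+1) ∧ HypOct.fn (phi w) q = -a) := by
    by_cases hb : w.2 qI = true
    · rw [if_pos hb] at euq evq
      right
      refine ⟨?_, ?_⟩ <;> [rw [euq]; rw [evq]] <;>
        simp only [hadef, hCval, hC'val] <;> push_cast <;> ring
    · rw [if_neg hb] at euq evq
      left
      refine ⟨?_, ?_⟩ <;> [rw [euq]; rw [evq]] <;>
        simp only [hadef, hCval, hC'val] <;> push_cast <;> ring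
  have hfix : ∀ i : Fin n, i ≠ pI → i ≠ qI → (phi w).1 i = w.1 i ∧ (phi w).2 i = w.2 i := by
    intro i h1 h2
    have hσi1 : w.1 i ≠ C := fun e => h1 (by rw [hpIdef, ← e, Equiv.Perm.inv_apply_self])
    have hσi2 : w.1 i ≠ C' := fun e => h2 (by rw [hqIdef, ← e, Equiv.Perm.inv_apply_self])
    refine ⟨?_, by rw [hphi2]⟩
    rw [hphi1, Equiv.Perm.mul_apply, Equiv.swap_apply_of_ne_of_ne hσi1 hσi2]
  have hidx : ∀ j : ℤ, 1 ≤ j → j ≤ (n:ℤ) → j ≠ p → j ≠ q →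
      ∃ i : Fin n, ((i : ℕ) : ℤ) = j - 1 ∧ i ≠ pI ∧ i ≠ qI := by
    intro j h1 h2 h3 h4
    refine ⟨⟨(j-1).toNat, by omega⟩, by simp; omega, ?_, ?_⟩
    · intro e
      have := congrArg (fun x : Fin n => ((x : ℕ) : ℤ)) e
      simp at this
      rw [hpdef] at h3
      omega
    · intro e
      have := congrArg (fun x : Fin n => ((x : ℕ) : ℤ)) e
      simp at this
      rw [hqdef] at h4
      omega
  have heq : ∀ j : ℤ, j ≠ p → j ≠ q → j ≠ -p → j ≠ -q →
      HypOct.fn (phi w) j = HypOct.fn w j := by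
    intro j h1 h2 h3 h4
    by_cases hj1 : 1 ≤ j ∧ j ≤ (n:ℤ)
    · obtain ⟨i, hi, hi1, hi2⟩ := hidx j hj1.1 hj1.2 h1 h2
      obtain ⟨e1, e2⟩ := hfix i hi1 hi2
      rw [HypOct.fn_eval_idx w i hi, HypOct.fn_eval_idx (phi w) i hi, e1, e2]
    · by_cases hj2 : 1 ≤ -j ∧ -j ≤ (n:ℤ)
      · obtain ⟨i, hi, hi1, hi2⟩ := hidx (-j) hj2.1 hj2.2 (by omega) (by omega)
        obtain ⟨e1, e2⟩ := hfix i hi1 hi2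
        rw [HypOct.fn_eval_negidx w i (by omega), HypOct.fn_eval_negidx (phi w) i (by omega),
          e1, e2]
      · rw [HypOct.fn_out w hj1 hj2, HypOct.fn_out (phi w) hj1 hj2]
  have hoth : ∀ j : ℤ, 1 ≤ j → j ≤ (n:ℤ) → j ≠ p → j ≠ q →
      HypOct.fn w j ≠ a ∧ HypOct.fn w j ≠ -a ∧ HypOct.fn w j ≠ a+1 ∧
        HypOct.fn w j ≠ -(a+1) := by
    intro j h1 h2 h3 h4
    obtain ⟨i, hi, hi1, hi2⟩ := hidx j h1 h2 h3 h4
    have hσi1 : w.1 i ≠ C := fun e => hi1 (by rw [hpIdef, ← e, Equiv.Perm.inv_apply_self])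
    have hσi2 : w.1 i ≠ C' := fun e => hi2 (by rw [hqIdef, ← e, Equiv.Perm.inv_apply_self])
    have hv1 : (w.1 i : ℕ) ≠ c := fun e => hσi1 (Fin.ext (by rw [e, hCval]))
    have hv2 : (w.1 i : ℕ) ≠ c + 1 := fun e => hσi2 (Fin.ext (by rw [e, hC'val]))
    have ee := HypOct.fn_eval_idx w i hi
    rw [hadef]
    by_cases hb : w.2 i = true
    · rw [if_pos hb] at ee
      refine ⟨?_, ?_, ?_, ?_⟩ <;> rw [ee] <;> omega
    · rw [if_neg hb] at ee
      refine ⟨?_, ?_, ?_, ?_⟩ <;> rw [ee] <;> omega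
  refine ⟨?_, ?_, ?_⟩
  · exact swap_Dset hu hv ha hp hq hpq hpar hP hQ heq hoth
  · exact swap_Lset hu hv ha hp hq hpq hpar hP hQ heq hoth
  · exact swap_len_parity hu hv ha hp hq hpq hpar hP hQ heq hoth

end CaseA

section CaseB
variable {n : ℕ} (w : HypOct n) (h : ¬ ∃ c, PA n w.1 c) (hn : 0 < n)

include h in
lemma phiB_eq : phi w =
    (w.1, fun i => if i = w.1⁻¹ ⟨0, hn⟩ then !(w.2 i) else w.2 i) := by
  rw [phi, dif_neg h, dif_pos hn]

include h hn in
lemma phiB_bundle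
    (hnc : ¬ ∀ i : Fin n, ((w.1 i : ℕ)) % 2 = (i : ℕ) % 2) :
    Dset n (HypOct.fn (phi w)) = Dset n (HypOct.fn w) ∧
    Lset n (HypOct.fn (phi w)) = Lset n (HypOct.fn w) ∧
    (lenStat n (HypOct.fn (phi w)) + lenStat n (HypOct.fn w)) % 2 = 1 := by
  have hA : ∀ c, ¬ PA n w.1 c := fun c hc => h ⟨c, hc⟩
  have hodd := dichotomy w.1 hn hA hnc
  set Z : Fin n := ⟨0, hn⟩ with hZdef
  set rI : Fin n := w.1⁻¹ Z with hrIdef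
  set r : ℤ := ((rI : ℕ) : ℤ) + 1 with hrdef
  have hphi1 : (phi w).1 = w.1 := by rw [phiB_eq w h hn]
  have hphi2 : (phi w).2 = fun i => if i = rI then !(w.2 i) else w.2 i := by
    rw [phiB_eq w h hn]
  have hrlt : (rI : ℕ) < n := rI.isLt
  have hu := HypOct.fn_neg w
  have hv := HypOct.fn_neg (phi w)
  have hr : 2 ≤ r ∧ r ≤ (n:ℤ) := by
    constructor <;> rw [hrdef] <;> omega
  have hre : r % 2 = 0 := by rw [hrdef]; omega
  have hir : ((rI : ℕ) : ℤ) = r - 1 := by rw [hrdef]; ring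
  have hσr : w.1 rI = Z := Equiv.Perm.apply_inv_self w.1 Z
  have hZval : (Z : ℕ) = 0 := rfl
  have eur := HypOct.fn_eval_idx w rI hir
  have evr := HypOct.fn_eval_idx (phi w) rI hir
  rw [hσr] at eur
  rw [hphi1, hσr, hphi2] at evr
  simp only [if_pos rfl] at evr
  have eZ : ((Z : ℕ) : ℤ) + 1 = 1 := by rw [hZval]; norm_num
  rw [eZ] at eur evr
  have hR : (HypOct.fn w r = 1 ∧ HypOct.fn (phi w) r = -1) ∨
      (HypOct.fn w r = -1 ∧ HypOct.fn (phi w) r = 1) := by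
    by_cases hb : w.2 rI = true
    · rw [if_pos hb] at eur
      rw [hb] at evr
      norm_num at eur evr
      exact Or.inr ⟨eur, evr⟩
    · rw [if_neg hb] at eur
      rw [Bool.not_eq_true] at hb
      rw [hb] at evr
      norm_num at eur evr
      exact Or.inl ⟨eur, evr⟩
  have hidx : ∀ j : ℤ, 1 ≤ j → j ≤ (n:ℤ) → j ≠ r →
      ∃ i : Fin n, ((i : ℕ) : ℤ) = j - 1 ∧ i ≠ rI := by
    intro j h1 h2 h3
    refine ⟨⟨(j-1).toNat, by omega⟩, by simp; omega, ?_⟩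
    intro e
    have := congrArg (fun x : Fin n => ((x : ℕ) : ℤ)) e
    simp at this
    rw [hrdef] at h3
    omega
  have hfix : ∀ i : Fin n, i ≠ rI → (phi w).1 i = w.1 i ∧ (phi w).2 i = w.2 i := by
    intro i h1
    refine ⟨by rw [hphi1], ?_⟩
    rw [hphi2]
    simp only [if_neg h1]
  have heq : ∀ j : ℤ, j ≠ r → j ≠ -r → HypOct.fn (phi w) j = HypOct.fn w j := by
    intro j h1 h2
    by_cases hj1 : 1 ≤ j ∧ j ≤ (n:ℤ)
    · obtain ⟨i, hi, hi1⟩ := hidx j hj1.1 hj1.2 h1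
      obtain ⟨e1, e2⟩ := hfix i hi1
      rw [HypOct.fn_eval_idx w i hi, HypOct.fn_eval_idx (phi w) i hi, e1, e2]
    · by_cases hj2 : 1 ≤ -j ∧ -j ≤ (n:ℤ)
      · obtain ⟨i, hi, hi1⟩ := hidx (-j) hj2.1 hj2.2 (by omega)
        obtain ⟨e1, e2⟩ := hfix i hi1
        rw [HypOct.fn_eval_negidx w i (by omega), HypOct.fn_eval_negidx (phi w) i (by omega),
          e1, e2]
      · rw [HypOct.fn_out w hj1 hj2, HypOct.fn_out (phi w) hj1 hj2]
  have hoth : ∀ j : ℤ, 1 ≤ j → j ≤ (n:ℤ) → j ≠ r →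
      2 ≤ HypOct.fn w j ∨ HypOct.fn w j ≤ -2 := by
    intro j h1 h2 h3
    obtain ⟨i, hi, hi1⟩ := hidx j h1 h2 h3
    have hσi : w.1 i ≠ Z := fun e => hi1 (by rw [hrIdef, ← e, Equiv.Perm.inv_apply_self])
    have hv1 : (w.1 i : ℕ) ≠ 0 := fun e => hσi (Fin.ext (by rw [e, hZval]))
    have ee := HypOct.fn_eval_idx w i hi
    by_cases hb : w.2 i = true
    · rw [if_pos hb] at ee
      rw [ee]; omega
    · rw [if_neg hb] at ee
      rw [ee]; omega
  refine ⟨?_, ?_, ?_⟩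
  · exact flip_Dset hu hv hr hre hR heq hoth
  · exact flip_Lset hu hv hr hre hR heq hoth
  · exact flip_len_parity hu hv hr hre hR heq hoth

end CaseB

section Rest
variable {n : ℕ}

lemma phi_invol (w : HypOct n) (hn : 0 < n) : phi (phi w) = w := by
  by_cases h : ∃ c, PA n w.1 c
  · obtain ⟨hc, hpar0⟩ := Nat.find_spec h
    set c := Nat.find h with hcdef
    set C : Fin n := ⟨c, Nat.lt_of_succ_lt hc⟩ with hCdef
    set C' : Fin n := ⟨c + 1, hc⟩ with hC'def
    have hphi1 : (phi w).1 = Equiv.swap C C' * w.1 := by rw [phiA_eq w h]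
    have hphi2 : (phi w).2 = w.2 := by rw [phiA_eq w h]
    have htau : ∀ x : Fin n,
        (((phi w).1⁻¹ x : Fin n) : ℕ) % 2 = ((w.1⁻¹ x : Fin n) : ℕ) % 2 := by
      intro x
      rw [hphi1, mul_inv_rev, Equiv.Perm.mul_apply, Equiv.swap_inv]
      by_cases h1 : x = C
      · rw [h1, Equiv.swap_apply_left]
        exact hpar0.symm
      · by_cases h2 : x = C'
        · rw [h2, Equiv.swap_apply_right]
          exact hpar0
        · rw [Equiv.swap_apply_of_ne_of_ne h1 h2]
    have hiff : ∀ d, PA n (phi w).1 d ↔ PA n w.1 d := by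
      intro d
      unfold PA
      exact exists_congr fun hd => by rw [htau, htau]
    have h' : ∃ d, PA n (phi w).1 d := ⟨c, (hiff c).mpr (Nat.find_spec h)⟩
    have hfind : Nat.find h' = c := by
      apply le_antisymm
      · exact Nat.find_min' h' ((hiff c).mpr (Nat.find_spec h))
      · rw [hcdef]
        exact Nat.find_min' h ((hiff _).mp (Nat.find_spec h'))
    have hsw : (⟨Nat.find h', Nat.lt_of_succ_lt (Nat.find_spec h').choose⟩ : Fin n) = C :=
      Fin.ext hfind
    have hsw' : (⟨Nat.find h' + 1, (Nat.find_spec h').choose⟩ : Fin n) = C' := by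
      apply Fin.ext
      show Nat.find h' + 1 = c + 1
      rw [hfind]
    rw [phiA_eq (phi w) h', hsw, hsw', hphi1, hphi2, ← mul_assoc, Equiv.swap_mul_self,
      one_mul]
  · have h2 : ¬ ∃ d, PA n (phi w).1 d := by
      rw [phiB_eq w h hn]
      exact h
    rw [phiB_eq (phi w) h2 hn, phiB_eq w h hn]
    refine Prod.ext rfl ?_
    show (fun i => if i = w.1⁻¹ ⟨0, hn⟩ then
        !(if i = w.1⁻¹ ⟨0, hn⟩ then !(w.2 i) else w.2 i)
      else (if i = w.1⁻¹ ⟨0, hn⟩ then !(w.2 i) else w.2 i)) = w.2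
    funext i
    by_cases hi : i = w.1⁻¹ ⟨0, hn⟩
    · rw [if_pos hi, if_pos hi, Bool.not_not]
    · rw [if_neg hi, if_neg hi]

lemma phi_ne (w : HypOct n) (hn : 0 < n) : phi w ≠ w := by
  by_cases h : ∃ c, PA n w.1 c
  · intro e
    have e1 := congrArg Prod.fst e
    rw [phiA_eq w h] at e1
    have e2 := congrArg
      (fun τ : Equiv.Perm (Fin n) => τ (w.1⁻¹
        ⟨Nat.find h, Nat.lt_of_succ_lt (Nat.find_spec h).choose⟩)) e1
    simp only [Equiv.Perm.mul_apply, Equiv.Perm.apply_inv_self, Equiv.swap_apply_left] at e2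
    have e3 := congrArg Fin.val e2
    simp at e3
  · intro e
    have e2 := congrArg Prod.snd e
    rw [phiB_eq w h hn] at e2
    have e3 := congrArg (fun g : Fin n → Bool => g (w.1⁻¹ ⟨0, hn⟩)) e2
    simp only [if_pos rfl] at e3
    simp at e3

lemma phi_not_chess (w : HypOct n) (hn : 0 < n)
    (hnc : ¬ ∀ i : Fin n, ((w.1 i : ℕ)) % 2 = (i : ℕ) % 2) :
    ¬ ∀ i : Fin n, (((phi w).1 i : ℕ)) % 2 = (i : ℕ) % 2 := by
  by_cases h : ∃ c, PA n w.1 c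
  · -- PA holds for phi w as well
    obtain ⟨hc, hpar0⟩ := Nat.find_spec h
    set c := Nat.find h with hcdef
    set C : Fin n := ⟨c, Nat.lt_of_succ_lt hc⟩ with hCdef
    set C' : Fin n := ⟨c + 1, hc⟩ with hC'def
    have hphi1 : (phi w).1 = Equiv.swap C C' * w.1 := by rw [phiA_eq w h]
    have htau : ∀ x : Fin n,
        (((phi w).1⁻¹ x : Fin n) : ℕ) % 2 = ((w.1⁻¹ x : Fin n) : ℕ) % 2 := by
      intro x
      rw [hphi1, mul_inv_rev, Equiv.Perm.mul_apply, Equiv.swap_inv]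
      by_cases h1 : x = C
      · rw [h1, Equiv.swap_apply_left]
        exact hpar0.symm
      · by_cases h2 : x = C'
        · rw [h2, Equiv.swap_apply_right]
          exact hpar0
        · rw [Equiv.swap_apply_of_ne_of_ne h1 h2]
    have hPA' : PA n (phi w).1 c := by
      refine ⟨hc, ?_⟩
      rw [htau, htau]
      exact hpar0
    exact PA_not_chess hPA'
  · have hphi1 : (phi w).1 = w.1 := by rw [phiB_eq w h hn]
    rw [hphi1]
    exact hnc

lemma chess_iff (w : HypOct n) :
    (∀ j ∈ Finset.Icc (1:ℤ) (n:ℤ), |HypOct.fn w j| % 2 = j % 2) ↔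
    (∀ i : Fin n, (w.1 i : ℕ) % 2 = (i : ℕ) % 2) := by
  have habs : ∀ (b : Bool) (x : ℤ), 0 ≤ x → |(if b then (-1:ℤ) else 1) * (x + 1)| = x + 1 := by
    intro b x hx
    rcases b with _ | _
    · rw [if_neg (by simp), one_mul, abs_of_nonneg (by omega)]
    · rw [if_pos rfl, neg_one_mul, abs_neg, abs_of_nonneg (by omega)]
  constructor
  · intro hall i
    have hlt : (i : ℕ) < n := i.isLt
    have hj := hall (((i : ℕ) : ℤ) + 1) (by simp only [Finset.mem_Icc]; omega)
    rw [HypOct.fn_eval_idx w i (by ring),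
      habs _ _ (Int.natCast_nonneg _)] at hj
    omega
  · intro hall j hj
    simp only [Finset.mem_Icc] at hj
    set i : Fin n := ⟨(j - 1).toNat, by omega⟩ with hidef
    have hival : ((i : ℕ) : ℤ) = j - 1 := by simp [hidef]; omega
    rw [HypOct.fn_eval_idx w i hival, habs _ _ (Int.natCast_nonneg _)]
    have := hall i
    omega

lemma neg_pow_cancel (k : ℕ) {a b : ℕ} (hab : (a + b) % 2 = 1) :
    (-1 : Polynomial ℤ) ^ a * X ^ k + (-1 : Polynomial ℤ) ^ b * X ^ k = 0 := by
  have : (-1 : Polynomial ℤ) ^ a = -(-1 : Polynomial ℤ) ^ b := by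
    rcases Nat.even_or_odd a with ha | ha
    · have hb : Odd b := by
        rw [Nat.odd_iff]
        rw [Nat.even_iff] at ha
        omega
      rw [ha.neg_one_pow, hb.neg_one_pow]
      norm_num
    · have hb : Even b := by
        rw [Nat.even_iff]
        rw [Nat.odd_iff] at ha
        omega
      rw [ha.neg_one_pow, hb.neg_one_pow]
  rw [this]
  ring

end Rest

lemma phi_bundle {n : ℕ} (w : HypOct n) (hn : 0 < n)
    (hncσ : ¬ ∀ i : Fin n, ((w.1 i : ℕ)) % 2 = (i : ℕ) % 2) :
    Dset n (HypOct.fn (phi w)) = Dset n (HypOct.fn w) ∧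
    Lset n (HypOct.fn (phi w)) = Lset n (HypOct.fn w) ∧
    (lenStat n (HypOct.fn (phi w)) + lenStat n (HypOct.fn w)) % 2 = 1 := by
  by_cases h : ∃ c, PA n w.1 c
  · exact phiA_bundle w h
  · exact phiB_bundle w h hn hncσ

/-- The signed generating function of `L` over a descent class of `Bₙ` is
supported on the even chessboard elements. -/
theorem supported_on_chessboard (n : ℕ) (I : Finset ℤ) (hI : I ⊆ Finset.Ico 0 (n : ℤ)) :
    ∑ w ∈ Finset.univ.filter (fun w : HypOct n => Dset n (HypOct.fn w) ⊆ I),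
        ((-1 : Polynomial ℤ) ^ lenStat n (HypOct.fn w) * X ^ Lstat n (HypOct.fn w))
      =
    ∑ w ∈ Finset.univ.filter (fun w : HypOct n => Dset n (HypOct.fn w) ⊆ I ∧
          ∀ j ∈ Finset.Icc (1 : ℤ) n, |HypOct.fn w j| % 2 = j % 2),
        ((-1 : Polynomial ℤ) ^ lenStat n (HypOct.fn w) * X ^ Lstat n (HypOct.fn w)) := by
  classical
  rw [← Finset.sum_filter_add_sum_filter_not
    (Finset.univ.filter fun w : HypOct n => Dset n (HypOct.fn w) ⊆ I)
    (fun w : HypOct n => ∀ j ∈ Finset.Icc (1 : ℤ) (n:ℤ), |HypOct.fn w j| % 2 = j % 2)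
    (fun w : HypOct n =>
      (-1 : Polynomial ℤ) ^ lenStat n (HypOct.fn w) * X ^ Lstat n (HypOct.fn w))]
  have hzero : ∑ w ∈ (Finset.univ.filter
        fun w : HypOct n => Dset n (HypOct.fn w) ⊆ I).filter
      (fun w : HypOct n => ¬ ∀ j ∈ Finset.Icc (1 : ℤ) (n:ℤ), |HypOct.fn w j| % 2 = j % 2),
      ((-1 : Polynomial ℤ) ^ lenStat n (HypOct.fn w) * X ^ Lstat n (HypOct.fn w)) = 0 := by
    apply Finset.sum_involution (fun w _ => phi w)
    · -- cancellation
      intro w hw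
      simp only [Finset.mem_filter] at hw
      obtain ⟨⟨_, hD⟩, hnc⟩ := hw
      have hn : 0 < n := by
        by_contra h0
        exact hnc (fun j hj => absurd (Finset.mem_Icc.mp hj) (by omega))
      have hncσ : ¬ ∀ i : Fin n, ((w.1 i : ℕ)) % 2 = (i : ℕ) % 2 :=
        fun hall => hnc ((chess_iff w).mpr hall)
      obtain ⟨hDe, hLe, hpar⟩ := phi_bundle w hn hncσ
      have hLs : Lstat n (HypOct.fn (phi w)) = Lstat n (HypOct.fn w) := by
        unfold Lstat
        rw [hLe]
      rw [hLs]
      exact neg_pow_cancel _ (by omega)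
    · -- nontrivial
      intro w hw _
      simp only [Finset.mem_filter] at hw
      have hn : 0 < n := by
        by_contra h0
        exact hw.2 (fun j hj => absurd (Finset.mem_Icc.mp hj) (by omega))
      exact phi_ne w hn
    · -- membership
      intro w hw
      simp only [Finset.mem_filter] at hw ⊢
      obtain ⟨⟨_, hD⟩, hnc⟩ := hw
      have hn : 0 < n := by
        by_contra h0
        exact hnc (fun j hj => absurd (Finset.mem_Icc.mp hj) (by omega))
      have hncσ : ¬ ∀ i : Fin n, ((w.1 i : ℕ)) % 2 = (i : ℕ) % 2 :=
        fun hall => hnc ((chess_iff w).mpr hall)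
      obtain ⟨hDe, hLe, hpar⟩ := phi_bundle w hn hncσ
      refine ⟨⟨Finset.mem_univ _, ?_⟩, ?_⟩
      · rw [hDe]
        exact hD
      · exact fun hall => (phi_not_chess w hn hncσ) ((chess_iff (phi w)).mp hall)
    · -- involution
      intro w hw
      simp only [Finset.mem_filter] at hw
      have hn : 0 < n := by
        by_contra h0
        exact hw.2 (fun j hj => absurd (Finset.mem_Icc.mp hj) (by omega))
      exact phi_invol w hn
  rw [hzero, add_zero, Finset.filter_filter]
end

section
/- If w ∈ B_n is not an even chessboard element (i.e. there is j with |w(j)| ≢ j mod 2), let i ∈ {0,…,n−1} be minimal with |w⁻¹(i)| ≡ |w⁻¹(i+1)| mod 2 and set w* = s_i w. Then L(w*) = L(w), D(w*) = D(w), l(w*) = l(w) ± 1, (w*)* = w, and w* ≠ w. -/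
open Finset Polynomial

/-- The Coxeter generator `sᵢ` of `Bₙ`, acting on values: for `i ≥ 1` it swaps
`i ↔ i+1` and `-i ↔ -(i+1)`; `s₀` swaps `1 ↔ -1`. -/
def sgen (i : ℤ) : ℤ → ℤ := fun x =>
  if i = 0 then (if x = 1 then -1 else if x = -1 then 1 else x)
  else if x = i then i + 1 else if x = i + 1 then i
  else if x = -i then -(i + 1) else if x = -(i + 1) then -i else x

section AuxStar

lemma sgen_invol (i x : ℤ) (hi : 0 ≤ i) : sgen i (sgen i x) = x := by
  simp only [sgen]; split_ifs <;> first | omega | (exfalso; assumption)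

lemma sgen_flip (i : ℤ) (hi : 0 < i) (a b : ℤ) (h : a < b) :
    sgen i b < sgen i a ↔ (a = i ∧ b = i+1) ∨ (a = -(i+1) ∧ b = -i) := by
  simp only [sgen]; split_ifs <;> first | omega | (exfalso; assumption)

lemma sgen_flip0 (a b : ℤ) (h : a < b) :
    sgen 0 b < sgen 0 a ↔ (-1 ≤ a ∧ b ≤ 1) := by
  simp only [sgen]; split_ifs <;> first | omega | (exfalso; assumption)

lemma sgen_fix_pos (i x : ℤ) (hi : 0 < i) (h1 : x ≠ i) (h2 : x ≠ i+1) (h3 : x ≠ -i)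
    (h4 : x ≠ -(i+1)) : sgen i x = x := by
  simp only [sgen]; split_ifs <;> first | omega | (exfalso; assumption)

lemma sgen0_fix (x : ℤ) (h1 : x ≠ 1) (h2 : x ≠ -1) : sgen 0 x = x := by
  simp only [sgen]; split_ifs <;> first | omega | (exfalso; assumption)

lemma sgen_sign (i x : ℤ) (hi : 0 < i) : sgen i x < 0 ↔ x < 0 := by
  simp only [sgen]; split_ifs <;> first | omega | (exfalso; assumption)

lemma sgen_val1 (i : ℤ) (hi : 0 < i) : sgen i i = i + 1 := by
  simp only [sgen]; split_ifs <;> first | omega | (exfalso; assumption)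

lemma sgen_val2 (i : ℤ) (hi : 0 < i) : sgen i (i+1) = i := by
  simp only [sgen]; split_ifs <;> first | omega | (exfalso; assumption)

lemma sgen_val3 (i : ℤ) (hi : 0 < i) : sgen i (-i) = -(i+1) := by
  simp only [sgen]; split_ifs <;> first | omega | (exfalso; assumption)

lemma sgen_val4 (i : ℤ) (hi : 0 < i) : sgen i (-(i+1)) = -i := by
  simp only [sgen]; split_ifs <;> first | omega | (exfalso; assumption)

lemma sgen_ne_succ (i : ℤ) (hi : 0 ≤ i) : sgen i (i+1) ≠ i + 1 := by
  simp only [sgen]; split_ifs <;> first | omega | (exfalso; assumption)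

lemma card_filter_flip {α : Type*} [DecidableEq α] (T : Finset α) (P Q : α → Prop)
    [DecidablePred P] [DecidablePred Q] (m : α) (hm : m ∈ T)
    (hagree : ∀ c ∈ T, c ≠ m → (P c ↔ Q c)) (hPm : P m ↔ ¬ Q m) :
    (T.filter P).card = (T.filter Q).card + 1 ∨ (T.filter Q).card = (T.filter P).card + 1 := by
  by_cases hQ : Q m
  · right
    have hstep : T.filter Q = insert m (T.filter P) := by
      ext x; simp only [Finset.mem_insert, Finset.mem_filter]
      constructor
      · rintro ⟨hx, hqx⟩
        rcases eq_or_ne x m with rfl | hne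
        · exact Or.inl rfl
        · exact Or.inr ⟨hx, (hagree x hx hne).2 hqx⟩
      · rintro (rfl | ⟨hx, hpx⟩)
        · exact ⟨hm, hQ⟩
        · refine ⟨hx, ?_⟩
          rcases eq_or_ne x m with rfl | hne
          · exact absurd hQ (hPm.1 hpx)
          · exact (hagree x hx hne).1 hpx
    rw [hstep, Finset.card_insert_of_notMem]
    simp only [Finset.mem_filter, not_and]
    intro _ hpm
    exact hPm.1 hpm hQ
  · left
    have hP : P m := hPm.2 hQ
    have hstep : T.filter P = insert m (T.filter Q) := by
      ext x; simp only [Finset.mem_insert, Finset.mem_filter]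
      constructor
      · rintro ⟨hx, hpx⟩
        rcases eq_or_ne x m with rfl | hne
        · exact Or.inl rfl
        · exact Or.inr ⟨hx, (hagree x hx hne).1 hpx⟩
      · rintro (rfl | ⟨hx, hqx⟩)
        · exact ⟨hm, hP⟩
        · refine ⟨hx, ?_⟩
          rcases eq_or_ne x m with rfl | hne
          · exact absurd hqx hQ
          · exact (hagree x hx hne).2 hqx
    rw [hstep, Finset.card_insert_of_notMem]
    simp only [Finset.mem_filter, not_and]
    intro _ hqm
    exact hQ hqm

end AuxStar

set_option maxHeartbeats 4000000 in
/-- If `w` is not an even chessboard element and `i` is minimal with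
`|w⁻¹(i)| ≡ |w⁻¹(i+1)| mod 2`, then `w* = sᵢw` satisfies `L(w*) = L(w)`,
`D(w*) = D(w)`, `l(w*) = l(w) ± 1`, `(w*)* = w` and `w* ≠ w`. -/
theorem star_involution (n : ℕ) (w : ℤ → ℤ) (hw : IsSigned n w)
    (hnot : ∃ j ∈ Finset.Icc (1 : ℤ) n, |w j| % 2 ≠ j % 2)
    (i : ℤ) (hi0 : 0 ≤ i) (hin : i ≤ (n : ℤ) - 1)
    (j j' : ℤ) (hj : j ∈ Finset.Icc (-(n : ℤ)) n) (hj' : j' ∈ Finset.Icc (-(n : ℤ)) n)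
    (hwj : w j = i) (hwj' : w j' = i + 1) (hpar : |j| % 2 = |j'| % 2)
    (hmin : ∀ i' : ℤ, 0 ≤ i' → i' < i →
      ∀ k k' : ℤ, k ∈ Finset.Icc (-(n : ℤ)) n → k' ∈ Finset.Icc (-(n : ℤ)) n →
        w k = i' → w k' = i' + 1 → |k| % 2 ≠ |k'| % 2) :
    Lstat n (fun x => sgen i (w x)) = Lstat n w ∧
    Dset n (fun x => sgen i (w x)) = Dset n w ∧
    (lenStat n (fun x => sgen i (w x)) = lenStat n w + 1 ∨
      lenStat n w = lenStat n (fun x => sgen i (w x)) + 1) ∧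
    (fun x => sgen i (sgen i (w x))) = w ∧
    (fun x => sgen i (w x)) ≠ w := by 
  obtain ⟨hodd, hbij⟩ := hw
  have hinj := hbij.2.1
  rw [Finset.mem_Icc] at hj hj'
  have hN : (1:ℤ) ≤ (n:ℤ) := by omega
  have hw0 : w 0 = 0 := by have h := hodd 0; rw [neg_zero] at h; omega
  have winj : ∀ x y : ℤ, -(n:ℤ) ≤ x → x ≤ n → -(n:ℤ) ≤ y → y ≤ n → w x = w y → x = y := by
    intro x y hx1 hx2 hy1 hy2 h
    exact hinj (Set.mem_Icc.mpr ⟨hx1, hx2⟩) (Set.mem_Icc.mpr ⟨hy1, hy2⟩) h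
  have hpar2 : j % 2 = j' % 2 := by
    rcases abs_cases j with ⟨h1, _⟩ | ⟨h1, _⟩ <;> rcases abs_cases j' with ⟨h2, _⟩ | ⟨h2, _⟩ <;>
      omega
  have hwnj : w (-j) = -i := by rw [hodd, hwj]
  have hwnj' : w (-j') = -(i+1) := by rw [hodd, hwj']
  have sgeninj : ∀ u v : ℤ, sgen i u = sgen i v → u = v := by
    intro u v h
    have h2 := congrArg (sgen i) h
    rwa [sgen_invol i u hi0, sgen_invol i v hi0] at h2
  have subkey : ∀ x y : ℤ, -(n:ℤ) ≤ x → x ≤ n → -(n:ℤ) ≤ y → y ≤ n → x % 2 ≠ y % 2 →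
      w x < w y → ¬ sgen i (w y) < sgen i (w x) := by
    intro x y hx1 hx2 hy1 hy2 hpxy hlt hL
    rcases eq_or_lt_of_le hi0 with hi | hipos
    · subst hi
      rw [sgen_flip0 _ _ hlt] at hL
      have hj0 : j = 0 := winj j 0 hj.1 hj.2 (by omega) (by omega) (by rw [hwj, hw0])
      have hqe : j' % 2 = 0 := by omega
      have hx' : x = -j' ∨ x = 0 := by
        have hwx : w x = -1 ∨ w x = 0 := by omega
        rcases hwx with h | h
        · exact Or.inl (winj x (-j') hx1 hx2 (by omega) (by omega)
            (by rw [h, hwnj']; norm_num))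
        · exact Or.inr (winj x 0 hx1 hx2 (by omega) (by omega) (by rw [h, hw0]))
      have hy' : y = 0 ∨ y = j' := by
        have hwy : w y = 0 ∨ w y = 1 := by omega
        rcases hwy with h | h
        · exact Or.inl (winj y 0 hy1 hy2 (by omega) (by omega) (by rw [h, hw0]))
        · exact Or.inr (winj y j' hy1 hy2 hj'.1 hj'.2 (by rw [h, hwj']; norm_num))
      rcases hx' with h | h <;> rcases hy' with h' | h' <;> omega
    · rw [sgen_flip i hipos _ _ hlt] at hL
      rcases hL with ⟨hxa, hyb⟩ | ⟨hxa, hyb⟩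
      · have hx' : x = j := winj x j hx1 hx2 hj.1 hj.2 (by rw [hxa, hwj])
        have hy' : y = j' := winj y j' hy1 hy2 hj'.1 hj'.2 (by rw [hyb, hwj'])
        omega
      · have hx' : x = -j' := winj x (-j') hx1 hx2 (by omega) (by omega) (by rw [hxa, hwnj'])
        have hy' : y = -j := winj y (-j) hy1 hy2 (by omega) (by omega) (by rw [hyb, hwnj])
        omega
  have key : ∀ x y : ℤ, -(n:ℤ) ≤ x → x ≤ n → -(n:ℤ) ≤ y → y ≤ n → x % 2 ≠ y % 2 →
      (sgen i (w y) < sgen i (w x) ↔ w y < w x) := by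
    intro x y hx1 hx2 hy1 hy2 hpxy
    rcases lt_trichotomy (w x) (w y) with hlt | heq | hgt
    · constructor
      · intro hL; exact absurd hL (subkey x y hx1 hx2 hy1 hy2 hpxy hlt)
      · intro h; omega
    · exact absurd (winj x y hx1 hx2 hy1 hy2 heq) (fun h => hpxy (by rw [h]))
    · constructor
      · intro _; exact hgt
      · intro _
        have h1 := subkey y x hy1 hy2 hx1 hx2 (by omega) hgt
        have h2 : sgen i (w y) ≠ sgen i (w x) := by
          intro h
          have := sgeninj _ _ h
          omega
        omega
  have hLset : Lset n (fun x => sgen i (w x)) = Lset n w := by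
    unfold Lset
    ext ⟨x, y⟩
    simp only [Finset.mem_filter, Finset.mem_product, Finset.mem_Icc]
    constructor
    · rintro ⟨⟨⟨hx1, hx2⟩, hy1, hy2⟩, hlt, hrev, hp⟩
      exact ⟨⟨⟨hx1, hx2⟩, hy1, hy2⟩, hlt, (key x y hx1 hx2 hy1 hy2 hp).1 hrev, hp⟩
    · rintro ⟨⟨⟨hx1, hx2⟩, hy1, hy2⟩, hlt, hrev, hp⟩
      exact ⟨⟨⟨hx1, hx2⟩, hy1, hy2⟩, hlt, (key x y hx1 hx2 hy1 hy2 hp).2 hrev, hp⟩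
  have hD : Dset n (fun x => sgen i (w x)) = Dset n w := by
    unfold Dset
    ext k
    simp only [Finset.mem_filter, Finset.mem_Ico]
    constructor <;> rintro ⟨⟨hk1, hk2⟩, hrev⟩ <;> refine ⟨⟨hk1, hk2⟩, ?_⟩
    · exact (key k (k+1) (by omega) (by omega) (by omega) (by omega) (by omega)).1 hrev
    · exact (key k (k+1) (by omega) (by omega) (by omega) (by omega) (by omega)).2 hrev
  have hlen : lenStat n (fun x => sgen i (w x)) = lenStat n w + 1 ∨
      lenStat n w = lenStat n (fun x => sgen i (w x)) + 1 := by
    rcases eq_or_lt_of_le hi0 with hi | hipos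
    · subst hi
      have hj0 : j = 0 := winj j 0 hj.1 hj.2 (by omega) (by omega) (by rw [hwj, hw0])
      have hq0 : j' ≠ 0 := by intro h; rw [h, hw0] at hwj'; omega
      have hqe : j' % 2 = 0 := by omega
      obtain ⟨m, hm1, hmn, hmval, hmuniq⟩ :
          ∃ m : ℤ, 1 ≤ m ∧ m ≤ (n:ℤ) ∧ (w m = 1 ∨ w m = -1) ∧
            ∀ c : ℤ, 1 ≤ c → c ≤ (n:ℤ) → c ≠ m → (w c ≠ -1 ∧ w c ≠ 0 ∧ w c ≠ 1) := by
        rcases lt_or_gt_of_ne hq0 with h | h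
        · refine ⟨-j', by omega, by omega, Or.inr (by rw [hwnj']; norm_num), ?_⟩
          intro c hc1 hc2 hcm
          refine ⟨?_, ?_, ?_⟩
          · intro hc
            exact hcm (winj c (-j') (by omega) (by omega) (by omega) (by omega)
              (by rw [hc, hwnj']; norm_num))
          · intro hc
            have := winj c 0 (by omega) (by omega) (by omega) (by omega) (by rw [hc, hw0])
            omega
          · intro hc
            have := winj c j' (by omega) (by omega) hj'.1 hj'.2 (by rw [hc, hwj']; norm_num)
            omega
        · refine ⟨j', by omega, by omega, Or.inl (by rw [hwj']; norm_num), ?_⟩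
          intro c hc1 hc2 hcm
          refine ⟨?_, ?_, ?_⟩
          · intro hc
            have := winj c (-j') (by omega) (by omega) (by omega) (by omega)
              (by rw [hc, hwnj']; norm_num)
            omega
          · intro hc
            have := winj c 0 (by omega) (by omega) (by omega) (by omega) (by rw [hc, hw0])
            omega
          · intro hc
            exact hcm (winj c j' (by omega) (by omega) hj'.1 hj'.2 (by rw [hc, hwj']; norm_num))
      have hval0 : ∀ c : ℤ, 1 ≤ c → c ≤ (n:ℤ) →
          (c = m ∧ ((w c = 1 ∧ sgen 0 (w c) = -1) ∨ (w c = -1 ∧ sgen 0 (w c) = 1))) ∨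
          (c ≠ m ∧ sgen 0 (w c) = w c ∧ w c ≠ -1 ∧ w c ≠ 0 ∧ w c ≠ 1) := by
        intro c hc1 hc2
        rcases eq_or_ne c m with h | h
        · subst h
          rcases hmval with hv | hv
          · exact Or.inl ⟨rfl, Or.inl ⟨hv, by rw [hv]; norm_num [sgen]⟩⟩
          · exact Or.inl ⟨rfl, Or.inr ⟨hv, by rw [hv]; norm_num [sgen]⟩⟩
        · obtain ⟨u1, u2, u3⟩ := hmuniq c hc1 hc2 h
          exact Or.inr ⟨h, sgen0_fix _ u3 u1, u1, u2, u3⟩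
      have hInv : invStat n (fun x => sgen 0 (w x)) = invStat n w := by
        unfold invStat; congr 1
        ext ⟨c, d⟩
        simp only [Finset.mem_filter, Finset.mem_product, Finset.mem_Icc]
        constructor <;> rintro ⟨⟨⟨hc1, hc2⟩, hd1, hd2⟩, hcd, hs⟩ <;>
          refine ⟨⟨⟨hc1, hc2⟩, hd1, hd2⟩, hcd, ?_⟩ <;>
          (have Hc := hval0 c hc1 hc2; have Hd := hval0 d hd1 hd2; omega)
      have hNsp : nspStat n (fun x => sgen 0 (w x)) = nspStat n w := by
        unfold nspStat; congr 1
        ext ⟨c, d⟩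
        simp only [Finset.mem_filter, Finset.mem_product, Finset.mem_Icc]
        constructor <;> rintro ⟨⟨⟨hc1, hc2⟩, hd1, hd2⟩, hcd, hs⟩ <;>
          refine ⟨⟨⟨hc1, hc2⟩, hd1, hd2⟩, hcd, ?_⟩ <;>
          (have Hc := hval0 c hc1 hc2; have Hd := hval0 d hd1 hd2; omega)
      have hNeg : negStat n (fun x => sgen 0 (w x)) = negStat n w + 1 ∨
          negStat n w = negStat n (fun x => sgen 0 (w x)) + 1 := by
        unfold negStat
        refine card_filter_flip _ _ _ m (Finset.mem_Icc.mpr ⟨hm1, hmn⟩) ?_ ?_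
        · intro c hc hcm
          rw [Finset.mem_Icc] at hc
          rcases hval0 c hc.1 hc.2 with ⟨e0, _⟩ | ⟨_, e1, e2, e3, e4⟩
          · exact absurd e0 hcm
          · show sgen 0 (w c) < 0 ↔ w c < 0
            omega
        · show sgen 0 (w m) < 0 ↔ ¬ w m < 0
          rcases hval0 m hm1 hmn with ⟨_, ⟨e1, e2⟩ | ⟨e1, e2⟩⟩ | ⟨e0, _⟩
          · omega
          · omega
          · exact absurd rfl e0
      unfold lenStat
      rcases hNeg with h | h
      · left; omega
      · right; omega
    · have hj0 : j ≠ 0 := by intro h; rw [h, hw0] at hwj; omega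
      have hq0 : j' ≠ 0 := by intro h; rw [h, hw0] at hwj'; omega
      obtain ⟨a, ha1, han, hva, hauniq⟩ :
          ∃ a : ℤ, 1 ≤ a ∧ a ≤ (n:ℤ) ∧ (w a = i ∨ w a = -i) ∧
            ∀ c : ℤ, 1 ≤ c → c ≤ (n:ℤ) → c ≠ a → (w c ≠ i ∧ w c ≠ -i) := by
        rcases lt_or_gt_of_ne hj0 with h | h
        · refine ⟨-j, by omega, by omega, Or.inr (by rw [hwnj]), ?_⟩
          intro c hc1 hc2 hcm
          constructor
          · intro hc
            have := winj c j (by omega) (by omega) hj.1 hj.2 (by rw [hc, hwj])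
            omega
          · intro hc
            exact hcm (winj c (-j) (by omega) (by omega) (by omega) (by omega)
              (by rw [hc, hwnj]))
        · refine ⟨j, by omega, by omega, Or.inl hwj, ?_⟩
          intro c hc1 hc2 hcm
          constructor
          · intro hc
            exact hcm (winj c j (by omega) (by omega) hj.1 hj.2 (by rw [hc, hwj]))
          · intro hc
            have := winj c (-j) (by omega) (by omega) (by omega) (by omega)
              (by rw [hc, hwnj])
            omega
      obtain ⟨b, hb1, hbn, hvb, hbuniq⟩ :
          ∃ b : ℤ, 1 ≤ b ∧ b ≤ (n:ℤ) ∧ (w b = i+1 ∨ w b = -(i+1)) ∧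
            ∀ c : ℤ, 1 ≤ c → c ≤ (n:ℤ) → c ≠ b → (w c ≠ i+1 ∧ w c ≠ -(i+1)) := by
        rcases lt_or_gt_of_ne hq0 with h | h
        · refine ⟨-j', by omega, by omega, Or.inr (by rw [hwnj']), ?_⟩
          intro c hc1 hc2 hcm
          constructor
          · intro hc
            have := winj c j' (by omega) (by omega) hj'.1 hj'.2 (by rw [hc, hwj'])
            omega
          · intro hc
            exact hcm (winj c (-j') (by omega) (by omega) (by omega) (by omega)
              (by rw [hc, hwnj']))
        · refine ⟨j', by omega, by omega, Or.inl hwj', ?_⟩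
          intro c hc1 hc2 hcm
          constructor
          · intro hc
            exact hcm (winj c j' (by omega) (by omega) hj'.1 hj'.2 (by rw [hc, hwj']))
          · intro hc
            have := winj c (-j') (by omega) (by omega) (by omega) (by omega)
              (by rw [hc, hwnj'])
            omega
      have hab : a ≠ b := by
        intro h; rw [h] at hva
        rcases hva with h1 | h1 <;> rcases hvb with h2 | h2 <;> omega
      have hval : ∀ c : ℤ, 1 ≤ c → c ≤ (n:ℤ) →
          (c = a ∧ w c = w a ∧ ((w c = i ∧ sgen i (w c) = i+1) ∨
            (w c = -i ∧ sgen i (w c) = -(i+1)))) ∨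
          (c = b ∧ w c = w b ∧ ((w c = i+1 ∧ sgen i (w c) = i) ∨
            (w c = -(i+1) ∧ sgen i (w c) = -i))) ∨
          (c ≠ a ∧ c ≠ b ∧ sgen i (w c) = w c ∧ w c ≠ i ∧ w c ≠ -i ∧ w c ≠ i+1 ∧
            w c ≠ -(i+1)) := by
        intro c hc1 hc2
        rcases eq_or_ne c a with h | h
        · subst h
          rcases hva with hv | hv
          · exact Or.inl ⟨rfl, rfl, Or.inl ⟨hv, by rw [hv, sgen_val1 i hipos]⟩⟩
          · exact Or.inl ⟨rfl, rfl, Or.inr ⟨hv, by rw [hv, sgen_val3 i hipos]⟩⟩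
        rcases eq_or_ne c b with h' | h'
        · subst h'
          rcases hvb with hv | hv
          · exact Or.inr (Or.inl ⟨rfl, rfl, Or.inl ⟨hv, by rw [hv, sgen_val2 i hipos]⟩⟩)
          · exact Or.inr (Or.inl ⟨rfl, rfl, Or.inr ⟨hv, by rw [hv, sgen_val4 i hipos]⟩⟩)
        · obtain ⟨u1, u2⟩ := hauniq c hc1 hc2 h
          obtain ⟨u3, u4⟩ := hbuniq c hc1 hc2 h'
          exact Or.inr (Or.inr ⟨h, h', sgen_fix_pos i (w c) hipos u1 u3 u2 u4, u1, u2, u3, u4⟩)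
      have hNeg : negStat n (fun x => sgen i (w x)) = negStat n w := by
        unfold negStat; congr 1
        ext c
        simp only [Finset.mem_filter, Finset.mem_Icc]
        have hsg := sgen_sign i (w c) hipos
        constructor <;> rintro ⟨h1, h2⟩ <;> exact ⟨h1, by tauto⟩
      have hcases : ((w a = i ∧ w b = i+1) ∨ (w a = -i ∧ w b = -(i+1))) ∨
          ((w a = i ∧ w b = -(i+1)) ∨ (w a = -i ∧ w b = i+1)) := by tauto
      rcases hcases with hss | hmx
      · have hNsp : nspStat n (fun x => sgen i (w x)) = nspStat n w := by
          unfold nspStat; congr 1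
          ext ⟨c, d⟩
          simp only [Finset.mem_filter, Finset.mem_product, Finset.mem_Icc]
          constructor <;> rintro ⟨⟨⟨hc1, hc2⟩, hd1, hd2⟩, hcd, hs⟩ <;>
            refine ⟨⟨⟨hc1, hc2⟩, hd1, hd2⟩, hcd, ?_⟩ <;>
            (have Hc := hval c hc1 hc2; have Hd := hval d hd1 hd2; omega)
        have hInv : invStat n (fun x => sgen i (w x)) = invStat n w + 1 ∨
            invStat n w = invStat n (fun x => sgen i (w x)) + 1 := by
          unfold invStat
          rcases lt_or_gt_of_ne hab with hor | hor
          · refine card_filter_flip _ _ _ (a, b) ?_ ?_ ?_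
            · simp only [Finset.mem_product, Finset.mem_Icc]
              exact ⟨⟨ha1, han⟩, hb1, hbn⟩
            · rintro ⟨c, d⟩ hmem hne
              simp only [Finset.mem_product, Finset.mem_Icc] at hmem
              obtain ⟨⟨hc1, hc2⟩, hd1, hd2⟩ := hmem
              have hne' : ¬(c = a ∧ d = b) := by
                rintro ⟨h1, h2⟩; exact hne (by rw [h1, h2])
              show (c < d ∧ sgen i (w d) < sgen i (w c)) ↔ (c < d ∧ w d < w c)
              have Hc := hval c hc1 hc2
              have Hd := hval d hd1 hd2
              omega
            · show (a < b ∧ sgen i (w b) < sgen i (w a)) ↔ ¬(a < b ∧ w b < w a)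
              rcases hss with ⟨g1, g2⟩ | ⟨g1, g2⟩
              · rw [g1, g2, sgen_val1 i hipos, sgen_val2 i hipos]; omega
              · rw [g1, g2, sgen_val3 i hipos, sgen_val4 i hipos]; omega
          · refine card_filter_flip _ _ _ (b, a) ?_ ?_ ?_
            · simp only [Finset.mem_product, Finset.mem_Icc]
              exact ⟨⟨hb1, hbn⟩, ha1, han⟩
            · rintro ⟨c, d⟩ hmem hne
              simp only [Finset.mem_product, Finset.mem_Icc] at hmem
              obtain ⟨⟨hc1, hc2⟩, hd1, hd2⟩ := hmem
              have hne' : ¬(c = b ∧ d = a) := by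
                rintro ⟨h1, h2⟩; exact hne (by rw [h1, h2])
              show (c < d ∧ sgen i (w d) < sgen i (w c)) ↔ (c < d ∧ w d < w c)
              have Hc := hval c hc1 hc2
              have Hd := hval d hd1 hd2
              omega
            · show (b < a ∧ sgen i (w a) < sgen i (w b)) ↔ ¬(b < a ∧ w a < w b)
              rcases hss with ⟨g1, g2⟩ | ⟨g1, g2⟩
              · rw [g1, g2, sgen_val1 i hipos, sgen_val2 i hipos]; omega
              · rw [g1, g2, sgen_val3 i hipos, sgen_val4 i hipos]; omega
        unfold lenStat
        rcases hInv with h | h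
        · left; omega
        · right; omega
      · have hInv : invStat n (fun x => sgen i (w x)) = invStat n w := by
          unfold invStat; congr 1
          ext ⟨c, d⟩
          simp only [Finset.mem_filter, Finset.mem_product, Finset.mem_Icc]
          constructor <;> rintro ⟨⟨⟨hc1, hc2⟩, hd1, hd2⟩, hcd, hs⟩ <;>
            refine ⟨⟨⟨hc1, hc2⟩, hd1, hd2⟩, hcd, ?_⟩ <;>
            (have Hc := hval c hc1 hc2; have Hd := hval d hd1 hd2; omega)
        have hNsp : nspStat n (fun x => sgen i (w x)) = nspStat n w + 1 ∨
            nspStat n w = nspStat n (fun x => sgen i (w x)) + 1 := by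
          unfold nspStat
          rcases lt_or_gt_of_ne hab with hor | hor
          · refine card_filter_flip _ _ _ (a, b) ?_ ?_ ?_
            · simp only [Finset.mem_product, Finset.mem_Icc]
              exact ⟨⟨ha1, han⟩, hb1, hbn⟩
            · rintro ⟨c, d⟩ hmem hne
              simp only [Finset.mem_product, Finset.mem_Icc] at hmem
              obtain ⟨⟨hc1, hc2⟩, hd1, hd2⟩ := hmem
              have hne' : ¬(c = a ∧ d = b) := by
                rintro ⟨h1, h2⟩; exact hne (by rw [h1, h2])
              show (c < d ∧ sgen i (w c) + sgen i (w d) < 0) ↔ (c < d ∧ w c + w d < 0)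
              have Hc := hval c hc1 hc2
              have Hd := hval d hd1 hd2
              omega
            · show (a < b ∧ sgen i (w a) + sgen i (w b) < 0) ↔ ¬(a < b ∧ w a + w b < 0)
              rcases hmx with ⟨g1, g2⟩ | ⟨g1, g2⟩
              · rw [g1, g2, sgen_val1 i hipos, sgen_val4 i hipos]; omega
              · rw [g1, g2, sgen_val3 i hipos, sgen_val2 i hipos]; omega
          · refine card_filter_flip _ _ _ (b, a) ?_ ?_ ?_
            · simp only [Finset.mem_product, Finset.mem_Icc]
              exact ⟨⟨hb1, hbn⟩, ha1, han⟩
            · rintro ⟨c, d⟩ hmem hne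
              simp only [Finset.mem_product, Finset.mem_Icc] at hmem
              obtain ⟨⟨hc1, hc2⟩, hd1, hd2⟩ := hmem
              have hne' : ¬(c = b ∧ d = a) := by
                rintro ⟨h1, h2⟩; exact hne (by rw [h1, h2])
              show (c < d ∧ sgen i (w c) + sgen i (w d) < 0) ↔ (c < d ∧ w c + w d < 0)
              have Hc := hval c hc1 hc2
              have Hd := hval d hd1 hd2
              omega
            · show (b < a ∧ sgen i (w b) + sgen i (w a) < 0) ↔ ¬(b < a ∧ w b + w a < 0)
              rcases hmx with ⟨g1, g2⟩ | ⟨g1, g2⟩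
              · rw [g1, g2, sgen_val1 i hipos, sgen_val4 i hipos]; omega
              · rw [g1, g2, sgen_val3 i hipos, sgen_val2 i hipos]; omega
        unfold lenStat
        rcases hNsp with h | h
        · left; omega
        · right; omega
  refine ⟨?_, hD, hlen, funext fun x => sgen_invol i (w x) hi0, ?_⟩
  · unfold Lstat; rw [hLset]
  · intro hEq
    have h := congrFun hEq j'
    simp only [hwj'] at h
    exact sgen_ne_succ i hi0 h
end
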